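/- arXiv:1007.0611 — 3 statements merged into one kernel-verified Lean document; each statement's English description precedes it below -/
import Mathlib

section
/- The standard dotted noncrossing matchings of type (n-k,k) with m undotted arcs are in bijection with standard Young tableaux of shape (n−m, m). Explicitly, sending M to the tableau whose bottom row consists of the right endpoints of the undotted arcs of M (in increasing order) and whose top row consists of all other numbers is a bijection. -/
/-- A noncrossing matching of type `(n-k, k)`: `k` pairwise-noncrossing arcs above a
horizontal line of `n` vertices (labelled `1,…,n`); the remaining `n-2k` vertices carry
rays, and no ray lies beneath an arc (every vertex strictly between the endpoints of an
arc is an endpoint of some arc). -/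
structure NCMatching (n k : ℕ) where
  arcs : Finset (ℕ × ℕ)
  card_arcs : arcs.card = k
  mem_range : ∀ p ∈ arcs, 1 ≤ p.1 ∧ p.1 < p.2 ∧ p.2 ≤ n
  endpoints_distinct : ∀ p ∈ arcs, ∀ q ∈ arcs, p ≠ q →
    p.1 ≠ q.1 ∧ p.1 ≠ q.2 ∧ p.2 ≠ q.1 ∧ p.2 ≠ q.2
  noncross : ∀ p ∈ arcs, ∀ q ∈ arcs, ¬ (p.1 < q.1 ∧ q.1 < p.2 ∧ p.2 < q.2)
  no_ray_under : ∀ p ∈ arcs, ∀ r, p.1 < r → r < p.2 → ∃ q ∈ arcs, r = q.1 ∨ r = q.2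

/-- Vertex `i` carries a ray of the matching `m`. -/
def NCMatching.IsRay {n k : ℕ} (m : NCMatching n k) (i : ℕ) : Prop :=
  1 ≤ i ∧ i ≤ n ∧ ∀ p ∈ m.arcs, p.1 ≠ i ∧ p.2 ≠ i

/-- A dotted noncrossing matching of type `(n-k,k)`: a noncrossing matching together with
a chosen subset of dotted arcs (every ray is regarded as dotted). -/
structure DottedNCM (n k : ℕ) extends NCMatching n k where
  dotted : Finset (ℕ × ℕ)
  dotted_subset : dotted ⊆ arcs

/-- A dotted noncrossing matching is standard if no dotted arc is nested beneath any other
arc and no ray lies to the right of any dotted arc. -/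
def DottedNCM.IsStandard {n k : ℕ} (M : DottedNCM n k) : Prop :=
  (∀ d ∈ M.dotted, ∀ q ∈ M.arcs, ¬ (q.1 < d.1 ∧ d.2 < q.2)) ∧
  (∀ r : ℕ, M.toNCMatching.IsRay r → ∀ d ∈ M.dotted, ¬ d.2 < r)

/-- A standard Young tableau of two-row shape `(n-m, m)`: a filling of the two-row diagram
with the numbers `1,…,n`, strictly increasing along rows and down columns. -/
structure TwoRowSYT (n m : ℕ) where
  top : Fin (n - m) → ℕ
  bot : Fin m → ℕ
  top_mono : StrictMono top
  bot_mono : StrictMono bot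
  col_incr : ∀ i : Fin m, ∀ h : (i : ℕ) < n - m, top ⟨i, h⟩ < bot i
  rows_disjoint : ∀ i j, top i ≠ bot j
  range_top : ∀ i, 1 ≤ top i ∧ top i ≤ n
  range_bot : ∀ i, 1 ≤ bot i ∧ bot i ≤ n
  cover : ∀ v, 1 ≤ v → v ≤ n → (∃ i, top i = v) ∨ (∃ i, bot i = v)


open Finset

/-- Walk value: (#closers − #openers) in `[x,y]`, as an integer. -/
def Nw (B : Finset ℕ) (x y : ℕ) : ℤ :=
  2 * ((B ∩ Finset.Icc x y).card : ℤ) - ((y : ℤ) - (x : ℤ) + 1)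

lemma Nw_self_mem {B : Finset ℕ} {x : ℕ} (h : x ∈ B) : Nw B x x = 1 := by
  have : B ∩ Finset.Icc x x = {x} := by
    rw [Finset.Icc_self]
    exact Finset.inter_singleton_of_mem h
  rw [Nw, this]; simp

lemma Nw_self_not_mem {B : Finset ℕ} {x : ℕ} (h : x ∉ B) : Nw B x x = -1 := by
  have : B ∩ Finset.Icc x x = ∅ := by
    rw [Finset.Icc_self]
    exact Finset.inter_singleton_of_notMem h
  rw [Nw, this]; simp

lemma Nw_split {B : Finset ℕ} {x t y : ℕ} (h1 : x ≤ t) (h2 : t < y) :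
    Nw B x y = Nw B x t + Nw B (t+1) y := by
  have hu : Finset.Icc x y = Finset.Icc x t ∪ Finset.Icc (t+1) y := by
    ext z; simp only [Finset.mem_Icc, Finset.mem_union]; omega
  have hd : Disjoint (B ∩ Finset.Icc x t) (B ∩ Finset.Icc (t+1) y) := by
    simp only [Finset.disjoint_left, Finset.mem_inter, Finset.mem_Icc]
    rintro a ⟨-, -, h⟩ ⟨-, h', -⟩; omega
  unfold Nw
  rw [hu, Finset.inter_union_distrib_left, Finset.card_union_of_disjoint hd]
  push_cast
  omega

lemma Nw_step_lo {B : Finset ℕ} {x y : ℕ} (h : x < y) :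
    Nw B x y = Nw B x x + Nw B (x+1) y := Nw_split le_rfl h

lemma Nw_step_hi {B : Finset ℕ} {x y : ℕ} (h : x < y) :
    Nw B x y = Nw B x (y-1) + Nw B y y := by
  have := Nw_split (B := B) (x := x) (t := y - 1) (y := y) (by omega) (by omega)
  rw [this]; congr 2; omega

lemma Nw_abs_one {B : Finset ℕ} (x : ℕ) : Nw B x x = 1 ∨ Nw B x x = -1 := by
  by_cases h : x ∈ B
  · exact Or.inl (Nw_self_mem h)
  · exact Or.inr (Nw_self_not_mem h)

/-- discrete IVT, max form: last time the walk is ≤ 0. -/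
lemma exists_cross_max (g : ℕ → ℤ) (lo hi : ℕ) (hle : lo ≤ hi) (hlo : g lo ≤ 0)
    (hhi : 1 ≤ g hi) (hstep : ∀ x, lo ≤ x → x < hi → g x = g (x+1) + 1 ∨ g x = g (x+1) - 1) :
    ∃ x, lo ≤ x ∧ x < hi ∧ g x = 0 ∧ g (x+1) = 1 ∧ ∀ z, x < z → z ≤ hi → 1 ≤ g z := by
  set s : Finset ℕ := (Finset.Icc lo hi).filter (fun t => g t ≤ 0) with hs
  have hne : s.Nonempty := ⟨lo, by simp [hs, Finset.mem_Icc, hle, hlo]⟩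
  set x := s.max' hne with hx
  have hxs : x ∈ s := s.max'_mem hne
  have hxlo : lo ≤ x := (Finset.mem_Icc.1 (Finset.mem_filter.1 hxs).1).1
  have hxhi : x ≤ hi := (Finset.mem_Icc.1 (Finset.mem_filter.1 hxs).1).2
  have hgx : g x ≤ 0 := (Finset.mem_filter.1 hxs).2
  have hbeyond : ∀ z, x < z → z ≤ hi → 1 ≤ g z := by
    intro z hz1 hz2
    by_contra hc
    push_neg at hc
    have : z ∈ s := by
      simp only [hs, Finset.mem_filter, Finset.mem_Icc]
      exact ⟨⟨by omega, hz2⟩, by omega⟩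
    exact absurd (s.le_max' z this) (by omega)
  have hxlt : x < hi := by
    rcases eq_or_lt_of_le hxhi with h | h
    · exfalso; rw [h] at hgx; omega
    · exact h
  have h1 : 1 ≤ g (x+1) := hbeyond (x+1) (by omega) (by omega)
  rcases hstep x hxlo hxlt with h | h <;>
    exact ⟨x, hxlo, hxlt, by omega, by omega, hbeyond⟩

/-- discrete IVT, min form: first time the walk is ≥ 0. -/
lemma exists_cross_min (g : ℕ → ℤ) (lo hi : ℕ) (hle : lo ≤ hi) (hlo : g lo ≤ -1)
    (hhi : 0 ≤ g hi) (hstep : ∀ x, lo ≤ x → x < hi → g (x+1) = g x + 1 ∨ g (x+1) = g x - 1) :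
    ∃ y, lo < y ∧ y ≤ hi ∧ g (y-1) = -1 ∧ g y = 0 ∧ ∀ z, lo ≤ z → z < y → g z ≤ -1 := by
  set s : Finset ℕ := (Finset.Icc lo hi).filter (fun t => 0 ≤ g t) with hs
  have hne : s.Nonempty := ⟨hi, by simp [hs, Finset.mem_Icc, hle, hhi]⟩
  set y := s.min' hne with hy
  have hys : y ∈ s := s.min'_mem hne
  have hylo : lo ≤ y := (Finset.mem_Icc.1 (Finset.mem_filter.1 hys).1).1
  have hyhi : y ≤ hi := (Finset.mem_Icc.1 (Finset.mem_filter.1 hys).1).2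
  have hgy : 0 ≤ g y := (Finset.mem_filter.1 hys).2
  have hbefore : ∀ z, lo ≤ z → z < y → g z ≤ -1 := by
    intro z hz1 hz2
    by_contra hc
    push_neg at hc
    have : z ∈ s := by
      simp only [hs, Finset.mem_filter, Finset.mem_Icc]
      exact ⟨⟨hz1, by omega⟩, by omega⟩
    exact absurd (s.min'_le z this) (by omega)
  have hylt : lo < y := by
    rcases eq_or_lt_of_le hylo with h | h
    · exfalso; rw [← h] at hgy; omega
    · exact h
  have h1 : g (y-1) ≤ -1 := hbefore (y-1) (by omega) (by omega)
  have hstep' := hstep (y-1) (by omega) (by omega)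
  rw [show y - 1 + 1 = y by omega] at hstep'
  rcases hstep' with h | h <;>
    exact ⟨y, hylt, hyhi, by omega, by omega, hbefore⟩

/-- candidates for the left endpoint matched to `b`. -/
def goodL (B : Finset ℕ) (b : ℕ) : Finset ℕ :=
  (Finset.Ico 1 b).filter (fun x => x ∉ B ∧ Nw B x b = 0)

/-- the left endpoint matched to the right endpoint `b`. -/
def leftOf (B : Finset ℕ) (b : ℕ) : ℕ := WithBot.unbotD 0 (goodL B b).max

lemma mem_goodL {B : Finset ℕ} {b x : ℕ} :
    x ∈ goodL B b ↔ (1 ≤ x ∧ x < b) ∧ x ∉ B ∧ Nw B x b = 0 := by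
  simp [goodL, Finset.mem_Ico]

lemma leftOf_eq_max' {B : Finset ℕ} {b : ℕ} (hne : (goodL B b).Nonempty) :
    leftOf B b = (goodL B b).max' hne := by
  rw [leftOf, ← Finset.coe_max' hne, WithBot.unbotD_coe]

lemma leftOf_mem_goodL {B : Finset ℕ} {b : ℕ} (hne : (goodL B b).Nonempty) :
    leftOf B b ∈ goodL B b := by
  rw [leftOf_eq_max' hne]; exact (goodL B b).max'_mem hne

lemma le_leftOf {B : Finset ℕ} {b : ℕ} (hne : (goodL B b).Nonempty) {x : ℕ}
    (hx : x ∈ goodL B b) : x ≤ leftOf B b := by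
  rw [leftOf_eq_max' hne]; exact (goodL B b).le_max' x hx

lemma leftOf_eq_of_max {B : Finset ℕ} {b x : ℕ} (hx : x ∈ goodL B b)
    (hmax : ∀ z ∈ goodL B b, z ≤ x) : leftOf B b = x := by
  have hne : (goodL B b).Nonempty := ⟨x, hx⟩
  exact le_antisymm (hmax _ (leftOf_mem_goodL hne)) (le_leftOf hne hx)

lemma Nw_walk_step (B : Finset ℕ) (b : ℕ) :
    ∀ x, 1 ≤ x → x < b → Nw B x b = Nw B (x+1) b + 1 ∨ Nw B x b = Nw B (x+1) b - 1 := by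
  intro x _ hx
  have h := Nw_step_lo (B := B) hx
  rcases Nw_abs_one (B := B) x with h1 | h1 <;> omega

/-- Existence of a matching left endpoint, given the ballot property at `b`. -/
lemma goodL_nonempty {B : Finset ℕ} {b : ℕ} (hb : b ∈ B)
    (hballot : 2 * (B ∩ Finset.Icc 1 b).card ≤ b) (h1 : 1 ≤ b) :
    (goodL B b).Nonempty := by
  have hlo : Nw B 1 b ≤ 0 := by
    unfold Nw
    push_cast
    omega
  have hhi : 1 ≤ Nw B b b := le_of_eq (Nw_self_mem hb).symm
  obtain ⟨x, hx1, hxb, hgx, hgx1, -⟩ :=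
    exists_cross_max (fun x => Nw B x b) 1 b h1 hlo hhi (Nw_walk_step B b)
  have hstep := Nw_step_lo (B := B) (x := x) (y := b) hxb
  have hxx : Nw B x x = -1 := by omega
  have hxB : x ∉ B := by
    intro hmem
    have := Nw_self_mem (B := B) hmem
    omega
  exact ⟨x, mem_goodL.2 ⟨⟨hx1, hxb⟩, hxB, hgx⟩⟩

/-- W1: strictly to the right of `leftOf B b`, the walk toward `b` is positive. -/
lemma Nw_pos_right_of_leftOf {B : Finset ℕ} {b : ℕ} (hb : b ∈ B)
    (hne : (goodL B b).Nonempty) :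
    ∀ x, leftOf B b < x → x ≤ b → 1 ≤ Nw B x b := by
  intro x hlt hle
  by_contra hc
  push_neg at hc
  have hx1 : 1 ≤ x := by
    have := mem_goodL.1 (leftOf_mem_goodL hne)
    omega
  have hxb : x < b := by
    rcases eq_or_lt_of_le hle with h | h
    · exfalso; rw [h] at hc; have := Nw_self_mem (B := B) hb; omega
    · exact h
  obtain ⟨z, hz1, hzb, hgz, hgz1, -⟩ :=
    exists_cross_max (fun t => Nw B t b) x b (le_of_lt hxb) (by show Nw B x b ≤ 0; omega) 
      (le_of_eq (Nw_self_mem hb).symm) (fun t ht htb => Nw_walk_step B b t (by omega) htb)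
  have hstep := Nw_step_lo (B := B) (x := z) (y := b) hzb
  have hzB : z ∉ B := by
    intro hmem; have := Nw_self_mem (B := B) hmem; omega
  have hzg : z ∈ goodL B b := mem_goodL.2 ⟨⟨by omega, hzb⟩, hzB, hgz⟩
  have := le_leftOf hne hzg
  omega

/-- Interior lemma: any non-`B` vertex strictly between `leftOf B b` and `b` is
the left endpoint of a uniquely matched arc nested inside. -/
lemma interior_is_left {B : Finset ℕ} {b : ℕ} (hb : b ∈ B) (hne : (goodL B b).Nonempty)
    {x : ℕ} (hax : leftOf B b < x) (hxb : x < b) (hxB : x ∉ B) :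
    ∃ b'' ∈ B, x < b'' ∧ b'' < b ∧ leftOf B b'' = x := by
  have hx1 : 1 ≤ x := by
    have := mem_goodL.1 (leftOf_mem_goodL hne)
    omega
  have hlo : Nw B x x ≤ -1 := le_of_eq (Nw_self_not_mem hxB)
  have hhi : 0 ≤ Nw B x b := by
    have := Nw_pos_right_of_leftOf hb hne x hax (le_of_lt hxb)
    omega
  have hstep : ∀ y, x ≤ y → y < b →
      Nw B x (y+1) = Nw B x y + 1 ∨ Nw B x (y+1) = Nw B x y - 1 := by
    intro y hy hyb
    have h := Nw_step_hi (B := B) (x := x) (y := y+1) (by omega)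
    simp only [Nat.add_sub_cancel] at h
    rcases Nw_abs_one (B := B) (y+1) with h1 | h1 <;> omega
  obtain ⟨y, hxy, hyb, hprev, hy0, hbefore⟩ :=
    exists_cross_min (fun t => Nw B x t) x b (by omega) hlo hhi hstep
  have hyB : y ∈ B := by
    have h := Nw_step_hi (B := B) (x := x) (y := y) hxy
    by_contra hc
    have := Nw_self_not_mem (B := B) hc
    omega
  have hylt : y < b := by
    rcases eq_or_lt_of_le hyb with h | h
    · exfalso
      have := Nw_pos_right_of_leftOf hb hne x hax (le_of_lt hxb)
      rw [h] at hy0; omega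
    · exact h
  refine ⟨y, hyB, hxy, hylt, ?_⟩
  apply leftOf_eq_of_max (mem_goodL.2 ⟨⟨hx1, hxy⟩, hxB, hy0⟩)
  intro z hz
  obtain ⟨⟨hz1, hzy⟩, hzB, hz0⟩ := mem_goodL.1 hz
  by_contra hc
  push_neg at hc
  have hsplit : Nw B x y = Nw B x (z-1) + Nw B z y := by
    have := Nw_split (B := B) (x := x) (t := z - 1) (y := y) (by omega) (by omega)
    rw [this]; congr 2; omega
  have := hbefore (z-1) (by omega) (by omega)
  omega

/-- Nesting/noncrossing of the arcs `(leftOf B b, b)`. -/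
lemma leftOf_noncross {B : Finset ℕ} {b b' : ℕ} (hb : b ∈ B) (hb' : b' ∈ B)
    (hne : (goodL B b).Nonempty) (hne' : (goodL B b').Nonempty) (hlt : b < b') :
    ¬ (leftOf B b < leftOf B b' ∧ leftOf B b' < b) := by
  rintro ⟨h1, h2⟩
  have hA := Nw_pos_right_of_leftOf hb hne (leftOf B b') h1 (le_of_lt h2)
  have hB := Nw_pos_right_of_leftOf hb' hne' (b+1) (by omega) (by omega)
  have h0 : Nw B (leftOf B b') b' = 0 := (mem_goodL.1 (leftOf_mem_goodL hne')).2.2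
  have hsplit := Nw_split (B := B) (x := leftOf B b') (t := b) (y := b') (le_of_lt h2) hlt
  omega

/-- `leftOf` is injective on right endpoints (given nonemptiness). -/
lemma leftOf_inj {B : Finset ℕ} {b b' : ℕ} (hb : b ∈ B) (hb' : b' ∈ B)
    (hne : (goodL B b).Nonempty) (hne' : (goodL B b').Nonempty) (hlt : b < b') :
    leftOf B b ≠ leftOf B b' := by
  intro he
  have h0 : Nw B (leftOf B b) b = 0 := (mem_goodL.1 (leftOf_mem_goodL hne)).2.2
  have h0' : Nw B (leftOf B b') b' = 0 := (mem_goodL.1 (leftOf_mem_goodL hne')).2.2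
  have hab : leftOf B b < b := (mem_goodL.1 (leftOf_mem_goodL hne)).1.2
  have hB := Nw_pos_right_of_leftOf hb' hne' (b+1) (by omega) (by omega)
  have hsplit := Nw_split (B := B) (x := leftOf B b) (t := b) (y := b') (le_of_lt hab) hlt
  rw [he] at hsplit h0
  omega

/-- The data of a "ballot set": the right endpoints of the undotted arcs. -/
structure GoodB (n m : ℕ) where
  B : Finset ℕ
  subset : B ⊆ Finset.Icc 1 n
  cardB : B.card = m
  ballot : ∀ b ∈ B, 2 * (B ∩ Finset.Icc 1 b).card ≤ b

namespace GoodB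

variable {n m : ℕ} (G : GoodB n m)

lemma one_le {b : ℕ} (hb : b ∈ G.B) : 1 ≤ b := (Finset.mem_Icc.1 (G.subset hb)).1

lemma le_n {b : ℕ} (hb : b ∈ G.B) : b ≤ n := (Finset.mem_Icc.1 (G.subset hb)).2

lemma hne {b : ℕ} (hb : b ∈ G.B) : (goodL G.B b).Nonempty :=
  goodL_nonempty hb (G.ballot b hb) (G.one_le hb)

lemma leftOf_lt {b : ℕ} (hb : b ∈ G.B) : leftOf G.B b < b :=
  (mem_goodL.1 (leftOf_mem_goodL (G.hne hb))).1.2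

lemma leftOf_pos {b : ℕ} (hb : b ∈ G.B) : 1 ≤ leftOf G.B b :=
  (mem_goodL.1 (leftOf_mem_goodL (G.hne hb))).1.1

lemma leftOf_not_mem {b : ℕ} (hb : b ∈ G.B) : leftOf G.B b ∉ G.B :=
  (mem_goodL.1 (leftOf_mem_goodL (G.hne hb))).2.1

lemma leftOf_injOn : Set.InjOn (leftOf G.B) G.B := by
  intro b hb b' hb' he
  by_contra hne'
  rcases lt_or_gt_of_ne hne' with h | h
  · exact leftOf_inj hb hb' (G.hne hb) (G.hne hb') h he
  · exact leftOf_inj hb' hb (G.hne hb') (G.hne hb) h he.symm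

/-- undotted arcs built from `B`. -/
def U : Finset (ℕ × ℕ) := G.B.image (fun b => (leftOf G.B b, b))

/-- left endpoints of undotted arcs. -/
def L : Finset ℕ := G.B.image (leftOf G.B)

/-- free vertices (not endpoints of undotted arcs). -/
def C : Finset ℕ := Finset.Icc 1 n \ (G.B ∪ G.L)

lemma mem_U {p : ℕ × ℕ} : p ∈ G.U ↔ p.2 ∈ G.B ∧ p.1 = leftOf G.B p.2 := by
  constructor
  · intro hp
    obtain ⟨b, hb, he⟩ := Finset.mem_image.1 hp
    rw [← he]; exact ⟨hb, rfl⟩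
  · rintro ⟨h1, h2⟩
    exact Finset.mem_image.2 ⟨p.2, h1, by rw [← h2]⟩

lemma disj_BL : Disjoint G.B G.L := by
  rw [Finset.disjoint_right]
  intro a ha
  obtain ⟨b, hb, he⟩ := Finset.mem_image.1 ha
  rw [← he]
  exact G.leftOf_not_mem hb

lemma L_subset : G.L ⊆ Finset.Icc 1 n := by
  intro a ha
  obtain ⟨b, hb, he⟩ := Finset.mem_image.1 ha
  rw [← he, Finset.mem_Icc]
  exact ⟨G.leftOf_pos hb, le_trans (le_of_lt (G.leftOf_lt hb)) (G.le_n hb)⟩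

lemma card_L : G.L.card = m := by
  rw [L, Finset.card_image_of_injOn G.leftOf_injOn, G.cardB]

lemma card_U : G.U.card = m := by
  have hinj : Function.Injective (fun b => (leftOf G.B b, b)) := by
    intro a b h
    exact (Prod.mk.injEq _ _ _ _ ▸ h : _ ∧ a = b).2
  rw [U, Finset.card_image_of_injective _ hinj, G.cardB]

lemma card_C : G.C.card = n - 2 * m := by
  rw [C, Finset.card_sdiff_of_subset (Finset.union_subset G.subset G.L_subset),
    Finset.card_union_of_disjoint G.disj_BL, G.cardB, G.card_L, Nat.card_Icc]
  omega

lemma mem_C {x : ℕ} : x ∈ G.C ↔ (1 ≤ x ∧ x ≤ n) ∧ x ∉ G.B ∧ x ∉ G.L := by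
  simp [C, Finset.mem_Icc, not_or, and_assoc]

/-- every vertex strictly inside an undotted arc is an endpoint of an undotted arc. -/
lemma interior_endpoint {p : ℕ × ℕ} (hp : p ∈ G.U) {x : ℕ} (h1 : p.1 < x) (h2 : x < p.2) :
    ∃ q ∈ G.U, x = q.1 ∨ x = q.2 := by
  obtain ⟨hb, ha⟩ := G.mem_U.1 hp
  by_cases hxB : x ∈ G.B
  · exact ⟨(leftOf G.B x, x), G.mem_U.2 ⟨hxB, rfl⟩, Or.inr rfl⟩
  · obtain ⟨b'', hb'', hx1, hx2, he⟩ :=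
      interior_is_left hb (G.hne hb) (by rw [← ha]; exact h1) h2 hxB
    exact ⟨(x, b''), G.mem_U.2 ⟨hb'', by rw [he]⟩, Or.inl rfl⟩

/-- every vertex strictly inside an undotted arc lies in `B ∪ L`. -/
lemma interior_mem {p : ℕ × ℕ} (hp : p ∈ G.U) {x : ℕ} (h1 : p.1 < x) (h2 : x < p.2) :
    x ∈ G.B ∪ G.L := by
  obtain ⟨q, hq, hor⟩ := G.interior_endpoint hp h1 h2
  obtain ⟨hb, ha⟩ := G.mem_U.1 hq
  rcases hor with h | h
  · exact Finset.mem_union_right _ (by rw [h, ha]; exact Finset.mem_image_of_mem _ hb)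
  · exact Finset.mem_union_left _ (by rw [h]; exact hb)

lemma not_C_interior {p : ℕ × ℕ} (hp : p ∈ G.U) {x : ℕ} (hx : x ∈ G.C) :
    ¬ (p.1 < x ∧ x < p.2) := by
  rintro ⟨h1, h2⟩
  have := G.interior_mem hp h1 h2
  have := G.mem_C.1 hx
  rcases Finset.mem_union.1 ‹x ∈ G.B ∪ G.L› with h | h
  · tauto
  · tauto

/-- noncrossing of undotted arcs. -/
lemma U_noncross {p q : ℕ × ℕ} (hp : p ∈ G.U) (hq : q ∈ G.U) :
    ¬ (p.1 < q.1 ∧ q.1 < p.2 ∧ p.2 < q.2) := by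
  rintro ⟨h1, h2, h3⟩
  obtain ⟨hb, ha⟩ := G.mem_U.1 hp
  obtain ⟨hb', ha'⟩ := G.mem_U.1 hq
  have := leftOf_noncross hb hb' (G.hne hb) (G.hne hb') h3
  rw [← ha, ← ha'] at this
  exact this ⟨h1, h2⟩

end GoodB

namespace GoodB

variable {n m : ℕ} (G : GoodB n m) (k : ℕ) (hcard : G.C.card = (n - 2*k) + 2*(k-m))

/-- enumeration of the free vertices in increasing order. -/
def ce (i : ℕ) : ℕ :=
  if h : i < (n - 2*k) + 2*(k-m) then (G.C.orderEmbOfFin hcard ⟨i, h⟩ : ℕ) else 0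

lemma ce_mem {i : ℕ} (hi : i < (n - 2*k) + 2*(k-m)) : G.ce k hcard i ∈ G.C := by
  rw [ce, dif_pos hi]; exact Finset.orderEmbOfFin_mem _ _ _

lemma ce_lt_ce {i j : ℕ} (hij : i < j) (hj : j < (n - 2*k) + 2*(k-m)) :
    G.ce k hcard i < G.ce k hcard j := by
  rw [ce, ce, dif_pos (lt_trans hij hj), dif_pos hj]
  exact (G.C.orderEmbOfFin hcard).strictMono (show (⟨i, _⟩ : Fin _) < ⟨j, _⟩ from hij)

lemma ce_surj {x : ℕ} (hx : x ∈ G.C) : ∃ i, i < (n - 2*k) + 2*(k-m) ∧ G.ce k hcard i = x := by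
  have := Finset.range_orderEmbOfFin G.C hcard
  have hx' : x ∈ Set.range (G.C.orderEmbOfFin hcard) := by rw [this]; exact_mod_cast hx
  obtain ⟨i, hi⟩ := hx'
  exact ⟨i.1, i.2, by rw [ce, dif_pos i.2]; rw [← hi]⟩

/-- the dotted arcs: consecutive pairs among the top free vertices. -/
def D : Finset (ℕ × ℕ) :=
  (Finset.range (k - m)).image
    (fun j => (G.ce k hcard (n - 2*k + 2*j), G.ce k hcard (n - 2*k + 2*j + 1)))

lemma mem_D {p : ℕ × ℕ} : p ∈ G.D k hcard ↔
    ∃ j < k - m, p = (G.ce k hcard (n - 2*k + 2*j), G.ce k hcard (n - 2*k + 2*j + 1)) := by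
  simp only [D, Finset.mem_image, Finset.mem_range]
  constructor
  · rintro ⟨j, hj, he⟩; exact ⟨j, hj, he.symm⟩
  · rintro ⟨j, hj, he⟩; exact ⟨j, hj, he.symm⟩

lemma D_fst_mem {p : ℕ × ℕ} (hp : p ∈ G.D k hcard) : p.1 ∈ G.C := by
  obtain ⟨j, hj, he⟩ := (G.mem_D k hcard).1 hp
  rw [he]; exact G.ce_mem k hcard (by omega)

lemma D_snd_mem {p : ℕ × ℕ} (hp : p ∈ G.D k hcard) : p.2 ∈ G.C := by
  obtain ⟨j, hj, he⟩ := (G.mem_D k hcard).1 hp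
  rw [he]; exact G.ce_mem k hcard (by omega)

lemma D_lt {p : ℕ × ℕ} (hp : p ∈ G.D k hcard) : p.1 < p.2 := by
  obtain ⟨j, hj, he⟩ := (G.mem_D k hcard).1 hp
  rw [he]; exact G.ce_lt_ce k hcard (by omega) (by omega)

/-- dotted arcs join consecutive free vertices. -/
lemma D_consecutive {p : ℕ × ℕ} (hp : p ∈ G.D k hcard) {c : ℕ} (hc : c ∈ G.C) :
    ¬ (p.1 < c ∧ c < p.2) := by
  rintro ⟨h1, h2⟩
  obtain ⟨j, hj, he⟩ := (G.mem_D k hcard).1 hp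
  obtain ⟨i, hi, hie⟩ := G.ce_surj k hcard hc
  rw [he] at h1 h2
  simp only at h1 h2
  rw [← hie] at h1 h2
  have hgt : n - 2*k + 2*j < i := by
    by_contra hcon
    push_neg at hcon
    rcases eq_or_lt_of_le hcon with h | h
    · rw [h] at h1; omega
    · exact absurd (G.ce_lt_ce k hcard h (by omega)) (by omega)
  have hlt : i < n - 2*k + 2*j + 1 := by
    by_contra hcon
    push_neg at hcon
    rcases eq_or_lt_of_le hcon with h | h
    · rw [← h] at h2; omega
    · exact absurd (G.ce_lt_ce k hcard h hi) (by omega)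
  omega

/-- vertices strictly inside a dotted arc are endpoints of undotted arcs. -/
lemma D_interior_mem (hn : ∀ c ∈ G.C, 1 ≤ c ∧ c ≤ n) {p : ℕ × ℕ} (hp : p ∈ G.D k hcard)
    {x : ℕ} (h1 : p.1 < x) (h2 : x < p.2) : x ∈ G.B ∪ G.L := by
  have hx1 : 1 ≤ x := by have := hn p.1 (G.D_fst_mem k hcard hp); omega
  have hx2 : x ≤ n := by have := hn p.2 (G.D_snd_mem k hcard hp); omega
  by_contra hc
  have : x ∈ G.C := Finset.mem_sdiff.2 ⟨Finset.mem_Icc.2 ⟨hx1, hx2⟩, hc⟩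
  exact G.D_consecutive k hcard hp this ⟨h1, h2⟩

lemma card_D : (G.D k hcard).card = k - m := by
  rw [D, Finset.card_image_of_injOn, Finset.card_range]
  intro a ha b hb he
  simp only [Finset.coe_range, Set.mem_Iio] at ha hb
  simp only [Prod.mk.injEq] at he
  have h1 := he.1
  by_contra hne'
  rcases lt_or_gt_of_ne hne' with h | h
  · have h2 := G.ce_lt_ce k hcard (show n-2*k+2*a < n-2*k+2*b from by omega)
      (show n-2*k+2*b < (n-2*k)+2*(k-m) from by omega)
    omega
  · have h2 := G.ce_lt_ce k hcard (show n-2*k+2*b < n-2*k+2*a from by omega)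
      (show n-2*k+2*a < (n-2*k)+2*(k-m) from by omega)
    omega

/-- a free vertex with index `≥ n-2k` is an endpoint of a dotted arc. -/
lemma high_is_D_endpoint {i : ℕ} (hi1 : n - 2*k ≤ i) (hi2 : i < (n - 2*k) + 2*(k-m)) :
    ∃ d ∈ G.D k hcard, G.ce k hcard i = d.1 ∨ G.ce k hcard i = d.2 := by
  set j := (i - (n - 2*k)) / 2 with hj
  have hjlt : j < k - m := by omega
  refine ⟨_, (G.mem_D k hcard).2 ⟨j, hjlt, rfl⟩, ?_⟩
  rcases Nat.even_or_odd (i - (n - 2*k)) with h | h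
  · left
    obtain ⟨c, hc⟩ := h
    have : i = n - 2*k + 2*j := by omega
    rw [this]
  · right
    obtain ⟨c, hc⟩ := h
    have : i = n - 2*k + 2*j + 1 := by omega
    rw [this]

end GoodB

namespace GoodB

variable {n m : ℕ} (G : GoodB n m) (k : ℕ)

lemma ce_le_ce (hcard : G.C.card = (n - 2*k) + 2*(k-m)) {i j : ℕ} (hij : i ≤ j)
    (hj : j < (n - 2*k) + 2*(k-m)) : G.ce k hcard i ≤ G.ce k hcard j := by
  rcases eq_or_lt_of_le hij with h | h
  · rw [h]
  · exact le_of_lt (G.ce_lt_ce k hcard h hj)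

lemma ce_ne (hcard : G.C.card = (n - 2*k) + 2*(k-m)) {i j : ℕ} (hij : i ≠ j)
    (hi : i < (n - 2*k) + 2*(k-m)) (hj : j < (n - 2*k) + 2*(k-m)) :
    G.ce k hcard i ≠ G.ce k hcard j := by
  rcases lt_or_gt_of_ne hij with h | h
  · exact ne_of_lt (G.ce_lt_ce k hcard h hj)
  · exact ne_of_gt (G.ce_lt_ce k hcard h hi)

lemma C_range : ∀ c ∈ G.C, 1 ≤ c ∧ c ≤ n := fun c hc => (G.mem_C.1 hc).1

lemma U_fst_mem_L {p : ℕ × ℕ} (hp : p ∈ G.U) : p.1 ∈ G.L := by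
  obtain ⟨hb, ha⟩ := G.mem_U.1 hp
  rw [ha]; exact Finset.mem_image_of_mem _ hb

lemma U_snd_mem_B {p : ℕ × ℕ} (hp : p ∈ G.U) : p.2 ∈ G.B := (G.mem_U.1 hp).1

lemma U_snd_image : G.U.image Prod.snd = G.B := by
  ext b
  simp only [Finset.mem_image]
  constructor
  · rintro ⟨p, hp, rfl⟩; exact G.U_snd_mem_B hp
  · intro hb; exact ⟨(leftOf G.B b, b), G.mem_U.2 ⟨hb, rfl⟩, rfl⟩

lemma CB_disj {x : ℕ} (hx : x ∈ G.C) : x ∉ G.B := (G.mem_C.1 hx).2.1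
lemma CL_disj {x : ℕ} (hx : x ∈ G.C) : x ∉ G.L := (G.mem_C.1 hx).2.2

lemma hcardC (hk : 2*k ≤ n) (hm : m ≤ k) : G.C.card = (n - 2*k) + 2*(k-m) := by rw [G.card_C]; omega

lemma disj_UD (hk : 2*k ≤ n) (hm : m ≤ k) : Disjoint G.U (G.D k (G.hcardC k hk hm)) := by
  rw [Finset.disjoint_left]
  intro p hpU hpD
  exact G.CB_disj (G.D_snd_mem k _ hpD) (G.U_snd_mem_B hpU)

/-- The dotted noncrossing matching built from a ballot set. -/
def toM (hk : 2*k ≤ n) (hm : m ≤ k) : DottedNCM n k where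
  arcs := G.U ∪ G.D k (G.hcardC k hk hm)
  dotted := G.D k (G.hcardC k hk hm)
  dotted_subset := Finset.subset_union_right
  card_arcs := by
    rw [Finset.card_union_of_disjoint (G.disj_UD k hk hm), G.card_U, G.card_D]
    omega
  mem_range := by
    intro p hp
    rcases Finset.mem_union.1 hp with h | h
    · obtain ⟨hb, ha⟩ := G.mem_U.1 h
      exact ⟨by rw [ha]; exact G.leftOf_pos hb, by rw [ha]; exact G.leftOf_lt hb, G.le_n hb⟩
    · have h1 := G.C_range _ (G.D_fst_mem k _ h)
      have h2 := G.C_range _ (G.D_snd_mem k _ h)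
      exact ⟨h1.1, G.D_lt k _ h, h2.2⟩
  endpoints_distinct := by
    intro p hp q hq hne'
    rcases Finset.mem_union.1 hp with hpU | hpD <;> rcases Finset.mem_union.1 hq with hqU | hqD
    · -- both undotted
      obtain ⟨hb, ha⟩ := G.mem_U.1 hpU
      obtain ⟨hb', ha'⟩ := G.mem_U.1 hqU
      have h22 : p.2 ≠ q.2 := by
        intro h
        apply hne'
        apply Prod.ext _ h
        rw [ha, ha', h]
      refine ⟨?_, ?_, ?_, h22⟩
      · rw [ha, ha']; exact fun h => h22 (G.leftOf_injOn hb hb' h)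
      · rw [ha]; intro h; exact G.leftOf_not_mem hb (h ▸ hb')
      · rw [ha']; intro h; exact G.leftOf_not_mem hb' (h.symm ▸ hb)
    · -- p undotted, q dotted
      have h1 := G.U_fst_mem_L hpU
      have h2 := G.U_snd_mem_B hpU
      have h3 := G.D_fst_mem k _ hqD
      have h4 := G.D_snd_mem k _ hqD
      exact ⟨fun h => G.CL_disj h3 (h ▸ h1), fun h => G.CL_disj h4 (h ▸ h1),
        fun h => G.CB_disj h3 (h ▸ h2), fun h => G.CB_disj h4 (h ▸ h2)⟩
    · -- p dotted, q undotted
      have h1 := G.U_fst_mem_L hqU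
      have h2 := G.U_snd_mem_B hqU
      have h3 := G.D_fst_mem k _ hpD
      have h4 := G.D_snd_mem k _ hpD
      exact ⟨fun h => G.CL_disj h3 (h ▸ h1), fun h => G.CB_disj h3 (h ▸ h2),
        fun h => G.CL_disj h4 (h ▸ h1), fun h => G.CB_disj h4 (h ▸ h2)⟩
    · -- both dotted
      obtain ⟨j, hj, he⟩ := (G.mem_D k _).1 hpD
      obtain ⟨j', hj', he'⟩ := (G.mem_D k _).1 hqD
      have hjj : j ≠ j' := by rintro rfl; exact hne' (he.trans he'.symm)
      rw [he, he']
      refine ⟨G.ce_ne k _ (by omega) (by omega) (by omega),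
        G.ce_ne k _ (by omega) (by omega) (by omega),
        G.ce_ne k _ (by omega) (by omega) (by omega),
        G.ce_ne k _ (by omega) (by omega) (by omega)⟩
  noncross := by
    intro p hp q hq
    rintro ⟨h1, h2, h3⟩
    rcases Finset.mem_union.1 hp with hpU | hpD <;> rcases Finset.mem_union.1 hq with hqU | hqD
    · exact G.U_noncross hpU hqU ⟨h1, h2, h3⟩
    · exact G.not_C_interior hpU (G.D_fst_mem k _ hqD) ⟨h1, h2⟩
    · exact G.not_C_interior hqU (G.D_snd_mem k _ hpD) ⟨h2, h3⟩
    · obtain ⟨j, hj, he⟩ := (G.mem_D k _).1 hpD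
      obtain ⟨j', hj', he'⟩ := (G.mem_D k _).1 hqD
      rw [he, he'] at h1 h2 h3
      simp only at h1 h2 h3
      have hjj : j < j' := by
        by_contra hcon
        push_neg at hcon
        have := G.ce_le_ce k (G.hcardC k hk hm)
          (show n-2*k+2*j' ≤ n-2*k+2*j from by omega) (by omega)
        omega
      have := G.ce_le_ce k (G.hcardC k hk hm)
        (show n-2*k+2*j+1 ≤ n-2*k+2*j' from by omega) (by omega)
      omega
  no_ray_under := by
    intro p hp r h1 h2
    rcases Finset.mem_union.1 hp with hpU | hpD
    · obtain ⟨q, hq, hor⟩ := G.interior_endpoint hpU h1 h2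
      exact ⟨q, Finset.mem_union_left _ hq, hor⟩
    · have := G.D_interior_mem k _ (G.C_range) hpD h1 h2
      rcases Finset.mem_union.1 this with h | h
      · exact ⟨(leftOf G.B r, r), Finset.mem_union_left _ (G.mem_U.2 ⟨h, rfl⟩), Or.inr rfl⟩
      · obtain ⟨b, hb, hbe⟩ := Finset.mem_image.1 h
        exact ⟨(r, b), Finset.mem_union_left _ (G.mem_U.2 ⟨hb, by rw [← hbe]⟩), Or.inl rfl⟩

lemma toM_undotted (hk : 2*k ≤ n) (hm : m ≤ k) : (G.toM k hk hm).arcs \ (G.toM k hk hm).dotted = G.U := by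
  show (G.U ∪ G.D k (G.hcardC k hk hm)) \ G.D k (G.hcardC k hk hm) = G.U
  rw [Finset.union_sdiff_right, Finset.sdiff_eq_self_of_disjoint (G.disj_UD k hk hm)]

lemma toM_card_undotted (hk : 2*k ≤ n) (hm : m ≤ k) : ((G.toM k hk hm).arcs \ (G.toM k hk hm).dotted).card = m := by
  rw [G.toM_undotted k hk hm, G.card_U]

lemma toM_ray (hk : 2*k ≤ n) (hm : m ≤ k) {r : ℕ} (hr : (G.toM k hk hm).toNCMatching.IsRay r) :
    ∃ i < n - 2*k, G.ce k (G.hcardC k hk hm) i = r := by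
  obtain ⟨hr1, hr2, hr3⟩ := hr
  have harcs : ∀ p ∈ G.U ∪ G.D k (G.hcardC k hk hm), p.1 ≠ r ∧ p.2 ≠ r := hr3
  have hrB : r ∉ G.B := by
    intro h
    exact (harcs (leftOf G.B r, r) (Finset.mem_union_left _ (G.mem_U.2 ⟨h, rfl⟩))).2 rfl
  have hrL : r ∉ G.L := by
    intro h
    obtain ⟨b, hb, hbe⟩ := Finset.mem_image.1 h
    exact (harcs (r, b) (Finset.mem_union_left _ (G.mem_U.2 ⟨hb, by rw [← hbe]⟩))).1 rfl
  have hrC : r ∈ G.C := G.mem_C.2 ⟨⟨hr1, hr2⟩, hrB, hrL⟩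
  obtain ⟨i, hi, hie⟩ := G.ce_surj k _ hrC
  refine ⟨i, ?_, hie⟩
  by_contra hcon
  push_neg at hcon
  obtain ⟨d, hd, hor⟩ := G.high_is_D_endpoint k (G.hcardC k hk hm) hcon hi
  have := harcs d (Finset.mem_union_right _ hd)
  rw [hie] at hor
  tauto

lemma toM_standard (hk : 2*k ≤ n) (hm : m ≤ k) : (G.toM k hk hm).IsStandard := by
  constructor
  · intro d hd q hq
    rintro ⟨h1, h2⟩
    have hdD : d ∈ G.D k (G.hcardC k hk hm) := hd
    rcases Finset.mem_union.1 (show q ∈ G.U ∪ G.D k (G.hcardC k hk hm) from hq) with hqU | hqD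
    · have hlt := G.D_lt k _ hdD
      exact G.not_C_interior hqU (G.D_fst_mem k _ hdD) ⟨h1, by omega⟩
    · obtain ⟨j, hj, he⟩ := (G.mem_D k _).1 hdD
      obtain ⟨j', hj', he'⟩ := (G.mem_D k _).1 hqD
      rw [he, he'] at h1 h2
      simp only at h1 h2
      have hjj : j' < j := by
        by_contra hcon
        push_neg at hcon
        have := G.ce_le_ce k (G.hcardC k hk hm)
          (show n-2*k+2*j ≤ n-2*k+2*j' from by omega) (by omega)
        omega
      have := G.ce_le_ce k (G.hcardC k hk hm)
        (show n-2*k+2*j'+1 ≤ n-2*k+2*j+1 from by omega) (by omega)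
      omega
  · intro r hr d hd
    obtain ⟨i, hi, hie⟩ := G.toM_ray k hk hm hr
    obtain ⟨j, hj, he⟩ := (G.mem_D k _).1 hd
    rw [he]
    simp only
    intro hcon
    rw [← hie] at hcon
    have := G.ce_le_ce k (G.hcardC k hk hm) (show i ≤ n-2*k+2*j+1 from by omega) (by omega)
    omega

end GoodB

section Counting

lemma orderEmb_count (s : Finset ℕ) {c : ℕ} (h : s.card = c) (i : Fin c) :
    (s.filter (· < s.orderEmbOfFin h i)).card = i := by
  have himg : s.filter (· < s.orderEmbOfFin h i)
      = (Finset.Iio i).image (fun j => s.orderEmbOfFin h j) := by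
    ext y
    simp only [Finset.mem_filter, Finset.mem_image, Finset.mem_Iio]
    constructor
    · rintro ⟨hy, hlt⟩
      have : y ∈ Set.range (s.orderEmbOfFin h) := by
        rw [Finset.range_orderEmbOfFin]; exact_mod_cast hy
      obtain ⟨j, hj⟩ := this
      refine ⟨j, ?_, hj⟩
      rw [← hj] at hlt
      exact (s.orderEmbOfFin h).lt_iff_lt.1 hlt
    · rintro ⟨j, hj, rfl⟩
      exact ⟨Finset.orderEmbOfFin_mem s h j, (s.orderEmbOfFin h).lt_iff_lt.2 hj⟩
  rw [himg, Finset.card_image_of_injective _ (s.orderEmbOfFin h).injective, Fin.card_Iio]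

lemma orderEmb_of_count (s : Finset ℕ) {c : ℕ} (h : s.card = c) {x : ℕ} (hx : x ∈ s)
    {i : ℕ} (hi : i < c) (hcount : (s.filter (· < x)).card = i) :
    s.orderEmbOfFin h ⟨i, hi⟩ = x := by
  have : x ∈ Set.range (s.orderEmbOfFin h) := by
    rw [Finset.range_orderEmbOfFin]; exact_mod_cast hx
  obtain ⟨j, hj⟩ := this
  have hji := orderEmb_count s h j
  rw [hj, hcount] at hji
  have : (⟨i, hi⟩ : Fin c) = j := by
    apply Fin.ext
    simp [← hji]
  rw [this, hj]

end Counting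

namespace DottedNCM

variable {n k : ℕ} (M : DottedNCM n k)

/-- the undotted arcs. -/
def Ud : Finset (ℕ × ℕ) := M.arcs \ M.dotted

/-- the right endpoints of undotted arcs. -/
def BM : Finset ℕ := M.Ud.image Prod.snd

lemma mem_Ud {p : ℕ × ℕ} : p ∈ M.Ud ↔ p ∈ M.arcs ∧ p ∉ M.dotted := Finset.mem_sdiff

lemma Ud_sub {p : ℕ × ℕ} (hp : p ∈ M.Ud) : p ∈ M.arcs := (M.mem_Ud.1 hp).1

lemma arc_lt {p : ℕ × ℕ} (hp : p ∈ M.arcs) : p.1 < p.2 := (M.mem_range p hp).2.1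

lemma mem_BM {b : ℕ} : b ∈ M.BM ↔ ∃ p ∈ M.Ud, p.2 = b := by
  simp only [BM, Finset.mem_image]

lemma fst_not_mem_BM {q : ℕ × ℕ} (hq : q ∈ M.arcs) : q.1 ∉ M.BM := by
  intro h
  obtain ⟨p, hp, he⟩ := M.mem_BM.1 h
  by_cases hpq : p = q
  · subst hpq; exact absurd he (ne_of_gt (M.arc_lt (M.Ud_sub hp)))
  · exact (M.endpoints_distinct q hq p (M.Ud_sub hp) (Ne.symm hpq)).2.1 he.symm

lemma snd_mem_BM {p : ℕ × ℕ} (hp : p ∈ M.Ud) : p.2 ∈ M.BM := M.mem_BM.2 ⟨p, hp, rfl⟩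

lemma card_image_snd {s : Finset (ℕ × ℕ)} (hs : s ⊆ M.arcs) :
    (s.image Prod.snd).card = s.card := by
  apply Finset.card_image_of_injOn
  intro p hp q hq he
  by_contra hne
  exact (M.endpoints_distinct p (hs hp) q (hs hq) hne).2.2.2 he

lemma card_image_fst {s : Finset (ℕ × ℕ)} (hs : s ⊆ M.arcs) :
    (s.image Prod.fst).card = s.card := by
  apply Finset.card_image_of_injOn
  intro p hp q hq he
  by_contra hne
  exact (M.endpoints_distinct p (hs hp) q (hs hq) hne).1 he

lemma arc_in_arc {p q : ℕ × ℕ} (hp : p ∈ M.arcs) (hq : q ∈ M.arcs) (hne : p ≠ q)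
    (h1 : p.1 < q.2) (h2 : q.2 < p.2) : p.1 < q.1 := by
  have hnc := M.noncross q hq p hp
  have hd := M.endpoints_distinct p hp q hq hne
  have hlt := M.arc_lt hq
  by_contra hcon
  push_neg at hcon
  rcases eq_or_lt_of_le hcon with h | h
  · exact hd.1 h.symm
  · exact hnc ⟨h, h1, h2⟩

lemma arc_in_arc' {p q : ℕ × ℕ} (hp : p ∈ M.arcs) (hq : q ∈ M.arcs) (hne : p ≠ q)
    (h1 : p.1 < q.1) (h2 : q.1 < p.2) : q.2 < p.2 := by
  have hnc := M.noncross p hp q hq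
  have hd := M.endpoints_distinct p hp q hq hne
  by_contra hcon
  push_neg at hcon
  rcases eq_or_lt_of_le hcon with h | h
  · exact hd.2.2.2 h
  · exact hnc ⟨h1, h2, h⟩

/-- every vertex strictly inside an arc of a standard matching is an endpoint of an
undotted arc nested strictly inside. -/
lemma interior_classify (hstd : M.IsStandard) {p : ℕ × ℕ} (hp : p ∈ M.arcs) {x : ℕ}
    (hx1 : p.1 < x) (hx2 : x < p.2) :
    ∃ q ∈ M.Ud, (x = q.1 ∨ x = q.2) ∧ p.1 < q.1 ∧ q.2 < p.2 := by
  obtain ⟨q, hq, hor⟩ := M.no_ray_under p hp x hx1 hx2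
  have hne : p ≠ q := by
    rintro rfl
    rcases hor with h | h <;> omega
  have hnest : p.1 < q.1 ∧ q.2 < p.2 := by
    rcases hor with h | h
    · have h1 : p.1 < q.1 := h ▸ hx1
      have h2 : q.1 < p.2 := h ▸ hx2
      exact ⟨h1, M.arc_in_arc' hp hq hne h1 h2⟩
    · have h1 : p.1 < q.2 := h ▸ hx1
      have h2 : q.2 < p.2 := h ▸ hx2
      exact ⟨M.arc_in_arc hp hq hne h1 h2, h2⟩
  have hqd : q ∉ M.dotted := by
    intro hd
    exact hstd.1 q hd p hp ⟨hnest.1, hnest.2⟩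
  exact ⟨q, M.mem_Ud.2 ⟨hq, hqd⟩, hor, hnest⟩

lemma Ioo_sdiff_eq (hstd : M.IsStandard) {p : ℕ × ℕ} (hp : p ∈ M.Ud) :
    Finset.Ioo p.1 p.2 \ M.BM
      = (M.Ud.filter (fun q => p.1 < q.1 ∧ q.2 < p.2)).image Prod.fst := by
  ext z
  simp only [Finset.mem_sdiff, Finset.mem_Ioo, Finset.mem_image, Finset.mem_filter]
  constructor
  · rintro ⟨⟨h1, h2⟩, hz⟩
    obtain ⟨q, hq, hor, hn1, hn2⟩ := M.interior_classify hstd (M.Ud_sub hp) h1 h2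
    rcases hor with h | h
    · exact ⟨q, ⟨hq, hn1, hn2⟩, h.symm⟩
    · exact absurd (h ▸ M.snd_mem_BM hq) hz
  · rintro ⟨q, ⟨hq, hn1, hn2⟩, rfl⟩
    have := M.arc_lt (M.Ud_sub hq)
    exact ⟨⟨hn1, by omega⟩, M.fst_not_mem_BM (M.Ud_sub hq)⟩

lemma Ioo_inter_eq (hstd : M.IsStandard) {p : ℕ × ℕ} (hp : p ∈ M.Ud) :
    M.BM ∩ Finset.Ioo p.1 p.2
      = (M.Ud.filter (fun q => p.1 < q.1 ∧ q.2 < p.2)).image Prod.snd := by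
  ext z
  simp only [Finset.mem_inter, Finset.mem_Ioo, Finset.mem_image, Finset.mem_filter]
  constructor
  · rintro ⟨hz, h1, h2⟩
    obtain ⟨q, hq, he⟩ := M.mem_BM.1 hz
    have hne : p ≠ q := by
      rintro rfl; omega
    subst he
    exact ⟨q, ⟨hq, M.arc_in_arc (M.Ud_sub hp) (M.Ud_sub hq) hne h1 h2, h2⟩, rfl⟩
  · rintro ⟨q, ⟨hq, hn1, hn2⟩, rfl⟩
    have := M.arc_lt (M.Ud_sub hq)
    exact ⟨M.snd_mem_BM hq, by omega, hn2⟩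

lemma Nw_zero (hstd : M.IsStandard) {p : ℕ × ℕ} (hp : p ∈ M.Ud) :
    Nw M.BM p.1 p.2 = 0 := by
  have hlt := M.arc_lt (M.Ud_sub hp)
  have hc1 : (M.BM ∩ Finset.Ioo p.1 p.2).card
      = (M.Ud.filter (fun q => p.1 < q.1 ∧ q.2 < p.2)).card := by
    rw [M.Ioo_inter_eq hstd hp]
    exact M.card_image_snd (le_trans (Finset.filter_subset _ _) Finset.sdiff_subset)
  have hc2 : (Finset.Ioo p.1 p.2 \ M.BM).card
      = (M.Ud.filter (fun q => p.1 < q.1 ∧ q.2 < p.2)).card := by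
    rw [M.Ioo_sdiff_eq hstd hp]
    exact M.card_image_fst (le_trans (Finset.filter_subset _ _) Finset.sdiff_subset)
  have hsplit : (Finset.Ioo p.1 p.2 ∩ M.BM).card + (Finset.Ioo p.1 p.2 \ M.BM).card
      = (Finset.Ioo p.1 p.2).card := Finset.card_inter_add_card_sdiff _ _
  rw [Finset.inter_comm] at hsplit
  have hIoo := Nat.card_Ioo p.1 p.2
  have hIcc : M.BM ∩ Finset.Icc p.1 p.2 = insert p.2 (M.BM ∩ Finset.Ioo p.1 p.2) := by
    ext z
    simp only [Finset.mem_inter, Finset.mem_Icc, Finset.mem_insert, Finset.mem_Ioo]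
    constructor
    · rintro ⟨hz, h1, h2⟩
      rcases eq_or_lt_of_le h2 with h | h
      · exact Or.inl h
      · refine Or.inr ⟨hz, ?_, h⟩
        rcases eq_or_lt_of_le h1 with h' | h'
        · exact absurd (h' ▸ hz) (M.fst_not_mem_BM (M.Ud_sub hp))
        · exact h'
    · rintro (rfl | ⟨hz, h1, h2⟩)
      · exact ⟨M.snd_mem_BM hp, by omega, le_rfl⟩
      · exact ⟨hz, by omega, by omega⟩
  have hnotin : p.2 ∉ M.BM ∩ Finset.Ioo p.1 p.2 := by
    simp [Finset.mem_Ioo]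
  have hcIcc : (M.BM ∩ Finset.Icc p.1 p.2).card
      = (M.Ud.filter (fun q => p.1 < q.1 ∧ q.2 < p.2)).card + 1 := by
    rw [hIcc, Finset.card_insert_of_notMem hnotin, hc1]
  rw [Nw, hcIcc]
  push_cast
  omega

lemma Nw_pos (hstd : M.IsStandard) {p : ℕ × ℕ} (hp : p ∈ M.Ud) {x : ℕ}
    (hx1 : p.1 < x) (hx2 : x ≤ p.2) : 1 ≤ Nw M.BM x p.2 := by
  rcases eq_or_lt_of_le hx2 with h | h
  · subst h; rw [Nw_self_mem (M.snd_mem_BM hp)]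
  have h1 : Finset.Icc x p.2 \ M.BM
      = (M.Ud.filter (fun q => x ≤ q.1 ∧ p.1 < q.1 ∧ q.2 < p.2)).image Prod.fst := by
    ext z
    simp only [Finset.mem_sdiff, Finset.mem_Icc, Finset.mem_image, Finset.mem_filter]
    constructor
    · rintro ⟨⟨hz1, hz2⟩, hz⟩
      have hzne : z ≠ p.2 := fun h => hz (h ▸ M.snd_mem_BM hp)
      obtain ⟨q, hq, hor, hn1, hn2⟩ := M.interior_classify hstd (M.Ud_sub hp)
        (show p.1 < z by omega) (show z < p.2 by omega)
      rcases hor with h' | h'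
      · exact ⟨q, ⟨hq, h' ▸ hz1, hn1, hn2⟩, h'.symm⟩
      · exact absurd (h' ▸ M.snd_mem_BM hq) hz
    · rintro ⟨q, ⟨hq, hq1, hn1, hn2⟩, rfl⟩
      have := M.arc_lt (M.Ud_sub hq)
      exact ⟨⟨hq1, by omega⟩, M.fst_not_mem_BM (M.Ud_sub hq)⟩
  have h2 : (M.Ud.filter (fun q => x ≤ q.1 ∧ p.1 < q.1 ∧ q.2 < p.2)).image Prod.snd
      ⊆ (Finset.Icc x p.2 ∩ M.BM).erase p.2 := by
    intro z hz
    obtain ⟨q, hq, rfl⟩ := Finset.mem_image.1 hz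
    obtain ⟨hqU, hq1, hn1, hn2⟩ := Finset.mem_filter.1 hq
    have := M.arc_lt (M.Ud_sub hqU)
    refine Finset.mem_erase.2 ⟨by omega, Finset.mem_inter.2
      ⟨Finset.mem_Icc.2 ⟨by omega, by omega⟩, M.snd_mem_BM hqU⟩⟩
  have hc1 : (Finset.Icc x p.2 \ M.BM).card
      = (M.Ud.filter (fun q => x ≤ q.1 ∧ p.1 < q.1 ∧ q.2 < p.2)).card := by
    rw [h1]
    exact M.card_image_fst (le_trans (Finset.filter_subset _ _) Finset.sdiff_subset)
  have hc2 : ((M.Ud.filter (fun q => x ≤ q.1 ∧ p.1 < q.1 ∧ q.2 < p.2)).image Prod.snd).card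
      = (M.Ud.filter (fun q => x ≤ q.1 ∧ p.1 < q.1 ∧ q.2 < p.2)).card :=
    M.card_image_snd (le_trans (Finset.filter_subset _ _) Finset.sdiff_subset)
  have hp2mem : p.2 ∈ Finset.Icc x p.2 ∩ M.BM :=
    Finset.mem_inter.2 ⟨Finset.mem_Icc.2 ⟨by omega, le_rfl⟩, M.snd_mem_BM hp⟩
  have hc3 := Finset.card_le_card h2
  rw [Finset.card_erase_of_mem hp2mem] at hc3
  have hsplit : (Finset.Icc x p.2 ∩ M.BM).card + (Finset.Icc x p.2 \ M.BM).card
      = (Finset.Icc x p.2).card := Finset.card_inter_add_card_sdiff _ _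
  have hIcc := Nat.card_Icc x p.2
  have hpos : 1 ≤ (Finset.Icc x p.2 ∩ M.BM).card := Finset.card_pos.2 ⟨p.2, hp2mem⟩
  rw [Nw, Finset.inter_comm]
  push_cast
  omega

lemma leftOf_eq (hstd : M.IsStandard) {p : ℕ × ℕ} (hp : p ∈ M.Ud) :
    leftOf M.BM p.2 = p.1 := by
  have hr := M.mem_range p (M.Ud_sub hp)
  apply leftOf_eq_of_max
  · exact mem_goodL.2 ⟨⟨hr.1, hr.2.1⟩, M.fst_not_mem_BM (M.Ud_sub hp), M.Nw_zero hstd hp⟩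
  · intro z hz
    obtain ⟨⟨hz1, hz2⟩, hzB, hz0⟩ := mem_goodL.1 hz
    by_contra hcon
    push_neg at hcon
    have := M.Nw_pos hstd hp hcon (le_of_lt hz2)
    omega

lemma ballot_BM : ∀ b ∈ M.BM, 2 * (M.BM ∩ Finset.Icc 1 b).card ≤ b := by
  intro b hb
  have h1 : M.BM ∩ Finset.Icc 1 b = (M.Ud.filter (fun q => q.2 ≤ b)).image Prod.snd := by
    ext z
    simp only [Finset.mem_inter, Finset.mem_Icc, Finset.mem_image, Finset.mem_filter]
    constructor
    · rintro ⟨hz, h1, h2⟩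
      obtain ⟨q, hq, rfl⟩ := M.mem_BM.1 hz
      exact ⟨q, ⟨hq, h2⟩, rfl⟩
    · rintro ⟨q, ⟨hq, hq2⟩, rfl⟩
      have hr := M.mem_range q (M.Ud_sub hq)
      exact ⟨M.snd_mem_BM hq, by omega, hq2⟩
  have h2 : (M.Ud.filter (fun q => q.2 ≤ b)).image Prod.fst ⊆ Finset.Icc 1 b \ M.BM := by
    intro z hz
    obtain ⟨q, hq, rfl⟩ := Finset.mem_image.1 hz
    obtain ⟨hqU, hq2⟩ := Finset.mem_filter.1 hq
    have hr := M.mem_range q (M.Ud_sub hqU)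
    exact Finset.mem_sdiff.2 ⟨Finset.mem_Icc.2 ⟨hr.1, by omega⟩,
      M.fst_not_mem_BM (M.Ud_sub hqU)⟩
  have hc1 : (M.BM ∩ Finset.Icc 1 b).card = (M.Ud.filter (fun q => q.2 ≤ b)).card := by
    rw [h1]
    exact M.card_image_snd (le_trans (Finset.filter_subset _ _) Finset.sdiff_subset)
  have hc2 : ((M.Ud.filter (fun q => q.2 ≤ b)).image Prod.fst).card
      = (M.Ud.filter (fun q => q.2 ≤ b)).card :=
    M.card_image_fst (le_trans (Finset.filter_subset _ _) Finset.sdiff_subset)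
  have hc3 := Finset.card_le_card h2
  have hsplit : (Finset.Icc 1 b ∩ M.BM).card + (Finset.Icc 1 b \ M.BM).card
      = (Finset.Icc 1 b).card := Finset.card_inter_add_card_sdiff _ _
  have hIcc := Nat.card_Icc 1 b
  rw [Finset.inter_comm] at hsplit
  omega

/-- the ballot set of a standard dotted matching. -/
def toG (m : ℕ) (hcard : (M.arcs \ M.dotted).card = m) : GoodB n m where
  B := M.BM
  subset := by
    intro b hb
    obtain ⟨q, hq, rfl⟩ := M.mem_BM.1 hb
    have hr := M.mem_range q (M.Ud_sub hq)
    exact Finset.mem_Icc.2 ⟨by omega, hr.2.2⟩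
  cardB := by
    rw [BM, M.card_image_snd (show M.Ud ⊆ M.arcs from Finset.sdiff_subset)]
    exact hcard
  ballot := M.ballot_BM

end DottedNCM

lemma GoodB.ext' {n m : ℕ} {G G' : GoodB n m} (h : G.B = G'.B) : G = G' := by
  cases G; cases G'; simp_all

lemma DottedNCM.ext' {n k : ℕ} {M M' : DottedNCM n k} (h1 : M.arcs = M'.arcs)
    (h2 : M.dotted = M'.dotted) : M = M' := by
  obtain ⟨⟨a, _, _, _, _, _⟩, d, _⟩ := M
  obtain ⟨⟨a', _, _, _, _, _⟩, d', _⟩ := M'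
  simp only at h1 h2
  subst h1; subst h2
  rfl

namespace DottedNCM

variable {n k : ℕ} (M : DottedNCM n k)

lemma U_toG (hstd : M.IsStandard) {m : ℕ} (hcard : (M.arcs \ M.dotted).card = m) :
    (M.toG m hcard).U = M.Ud := by
  ext p
  rw [GoodB.mem_U]
  show p.2 ∈ M.BM ∧ p.1 = leftOf M.BM p.2 ↔ _
  constructor
  · rintro ⟨hb, ha⟩
    obtain ⟨q, hq, he⟩ := M.mem_BM.1 hb
    have : p = q := by
      have := M.leftOf_eq hstd hq
      rw [he] at this
      apply Prod.ext
      · rw [ha, this]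
      · exact he.symm
    rw [this]; exact hq
  · intro hp
    exact ⟨M.snd_mem_BM hp, (M.leftOf_eq hstd hp).symm⟩

lemma L_toG (hstd : M.IsStandard) {m : ℕ} (hcard : (M.arcs \ M.dotted).card = m) :
    (M.toG m hcard).L = M.Ud.image Prod.fst := by
  ext x
  show x ∈ M.BM.image (leftOf M.BM) ↔ _
  simp only [Finset.mem_image]
  constructor
  · rintro ⟨b, hb, rfl⟩
    obtain ⟨q, hq, rfl⟩ := M.mem_BM.1 hb
    exact ⟨q, hq, (M.leftOf_eq hstd hq).symm⟩
  · rintro ⟨q, hq, he⟩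
    exact ⟨q.2, M.snd_mem_BM hq, by rw [M.leftOf_eq hstd hq, he]⟩

lemma not_mem_BM_of_not_endpoint {x : ℕ}
    (hx : ∀ q ∈ M.arcs, q.1 ≠ x ∧ q.2 ≠ x) : x ∉ M.BM := by
  intro h
  obtain ⟨q, hq, he⟩ := M.mem_BM.1 h
  exact (hx q (M.Ud_sub hq)).2 he

lemma mem_C_iff (hstd : M.IsStandard) {m : ℕ} (hcard : (M.arcs \ M.dotted).card = m)
    {x : ℕ} : x ∈ (M.toG m hcard).C ↔
      (M.toNCMatching.IsRay x ∨ ∃ d ∈ M.dotted, x = d.1 ∨ x = d.2) := by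
  rw [GoodB.mem_C, M.L_toG hstd hcard]
  show ((1 ≤ x ∧ x ≤ n) ∧ x ∉ M.BM ∧ x ∉ M.Ud.image Prod.fst) ↔ _
  constructor
  · rintro ⟨⟨h1, h2⟩, hB, hL⟩
    by_cases hend : ∃ q ∈ M.arcs, x = q.1 ∨ x = q.2
    · obtain ⟨q, hq, hor⟩ := hend
      right
      by_cases hdot : q ∈ M.dotted
      · exact ⟨q, hdot, hor⟩
      · exfalso
        have hqU : q ∈ M.Ud := M.mem_Ud.2 ⟨hq, hdot⟩
        rcases hor with h | h
        · exact hL (Finset.mem_image.2 ⟨q, hqU, h.symm⟩)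
        · exact hB (h ▸ M.snd_mem_BM hqU)
    · left
      push_neg at hend
      exact ⟨h1, h2, fun p hp => ⟨fun h => (hend p hp).1 h.symm, fun h => (hend p hp).2 h.symm⟩⟩
  · rintro (⟨h1, h2, hray⟩ | ⟨d, hd, hor⟩)
    · refine ⟨⟨h1, h2⟩, M.not_mem_BM_of_not_endpoint hray, ?_⟩
      intro h
      obtain ⟨q, hq, he⟩ := Finset.mem_image.1 h
      exact (hray q (M.Ud_sub hq)).1 he
    · have hdarc := M.dotted_subset hd
      have hr := M.mem_range d hdarc
      have hnB : x ∉ M.BM := by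
        intro h
        obtain ⟨q, hq, he⟩ := M.mem_BM.1 h
        have hne : d ≠ q := by
          intro hdq
          exact (M.mem_Ud.1 hq).2 (hdq ▸ hd)
        obtain ⟨a1, a2, a3, a4⟩ := M.endpoints_distinct d hdarc q (M.Ud_sub hq) hne
        rcases hor with h' | h' <;> omega
      have hnL : x ∉ M.Ud.image Prod.fst := by
        intro h
        obtain ⟨q, hq, he⟩ := Finset.mem_image.1 h
        have hne : d ≠ q := by
          intro hdq
          exact (M.mem_Ud.1 hq).2 (hdq ▸ hd)
        obtain ⟨a1, a2, a3, a4⟩ := M.endpoints_distinct d hdarc q (M.Ud_sub hq) hne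
        rcases hor with h' | h' <;> omega
      refine ⟨⟨?_, ?_⟩, hnB, hnL⟩ <;> rcases hor with h' | h' <;> omega
  
/-- no endpoint of another arc lies strictly inside a dotted arc. -/
lemma dotted_interior_free (hstd : M.IsStandard) {d d' : ℕ × ℕ} (hd : d ∈ M.dotted)
    (hd' : d' ∈ M.dotted) {x : ℕ} (hor : x = d'.1 ∨ x = d'.2) :
    ¬ (d.1 < x ∧ x < d.2) := by
  rintro ⟨h1, h2⟩
  obtain ⟨q', hq', hor', hn1, hn2⟩ :=
    M.interior_classify hstd (M.dotted_subset hd) h1 h2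
  have hne : d' ≠ q' := by
    intro h
    exact (M.mem_Ud.1 hq').2 (h ▸ hd')
  obtain ⟨a1, a2, a3, a4⟩ :=
    M.endpoints_distinct d' (M.dotted_subset hd') q' (M.Ud_sub hq') hne
  rcases hor with h | h <;> rcases hor' with h' | h' <;> omega

lemma dotted_order (hstd : M.IsStandard) {d d' : ℕ × ℕ} (hd : d ∈ M.dotted)
    (hd' : d' ∈ M.dotted) (hne : d ≠ d') : d'.2 < d.1 ∨ d.2 < d'.1 := by
  have harc := M.dotted_subset hd
  have harc' := M.dotted_subset hd'
  have hr := M.mem_range d harc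
  have hr' := M.mem_range d' harc'
  have hdist := M.endpoints_distinct d harc d' harc' hne
  have h1 := M.dotted_interior_free hstd hd hd' (Or.inl rfl)
  have h2 := M.dotted_interior_free hstd hd hd' (Or.inr rfl)
  have h3 := hstd.1 d hd d' harc'
  omega

lemma ray_lt_dotted (hstd : M.IsStandard) {r : ℕ} (hray : M.toNCMatching.IsRay r)
    {d : ℕ × ℕ} (hd : d ∈ M.dotted) : r < d.1 := by
  have harc := M.dotted_subset hd
  have hr := M.mem_range d harc
  have hne1 : d.1 ≠ r := (hray.2.2 d harc).1
  have hne2 : d.2 ≠ r := (hray.2.2 d harc).2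
  have hnin : ¬ (d.1 < r ∧ r < d.2) := by
    rintro ⟨h1, h2⟩
    obtain ⟨q, hq, hor⟩ := M.no_ray_under d harc r h1 h2
    rcases hor with h | h
    · exact (hray.2.2 q hq).1 h.symm
    · exact (hray.2.2 q hq).2 h.symm
  have := hstd.2 r hray d hd
  omega

lemma card_dotted {m : ℕ} (hcard : (M.arcs \ M.dotted).card = m) :
    M.dotted.card = k - m := by
  have h1 := Finset.card_sdiff_of_subset M.dotted_subset
  have h2 := Finset.card_le_card M.dotted_subset
  rw [M.card_arcs] at h1 h2
  omega

end DottedNCM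

namespace GoodB

lemma ce_of_count {n m : ℕ} (G : GoodB n m) (k : ℕ)
    (hcard : G.C.card = (n - 2*k) + 2*(k-m)) {x : ℕ} (hx : x ∈ G.C) {i : ℕ}
    (hi : i < (n-2*k)+2*(k-m)) (hcount : (G.C.filter (· < x)).card = i) :
    G.ce k hcard i = x := by
  rw [GoodB.ce, dif_pos hi]
  exact orderEmb_of_count _ hcard hx hi hcount

end GoodB

namespace DottedNCM

variable {n k : ℕ} (M : DottedNCM n k)

/-- the rays, as a finset. -/
def raysF : Finset ℕ :=
  (Finset.Icc 1 n).filter (fun x => ∀ q ∈ M.arcs, q.1 ≠ x ∧ q.2 ≠ x)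

lemma mem_raysF {x : ℕ} : x ∈ M.raysF ↔ M.toNCMatching.IsRay x := by
  simp only [raysF, Finset.mem_filter, Finset.mem_Icc, NCMatching.IsRay, and_assoc]

/-- the endpoints of dotted arcs, as a finset. -/
def DE : Finset ℕ := M.dotted.image Prod.fst ∪ M.dotted.image Prod.snd

lemma mem_DE {x : ℕ} : x ∈ M.DE ↔ ∃ d ∈ M.dotted, x = d.1 ∨ x = d.2 := by
  simp only [DE, Finset.mem_union, Finset.mem_image]
  constructor
  · rintro (⟨d, hd, rfl⟩ | ⟨d, hd, rfl⟩)
    · exact ⟨d, hd, Or.inl rfl⟩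
    · exact ⟨d, hd, Or.inr rfl⟩
  · rintro ⟨d, hd, rfl | rfl⟩
    · exact Or.inl ⟨d, hd, rfl⟩
    · exact Or.inr ⟨d, hd, rfl⟩

lemma ray_not_endpoint {x : ℕ} (hray : M.toNCMatching.IsRay x) {q : ℕ × ℕ}
    (hq : q ∈ M.arcs) : x ≠ q.1 ∧ x ≠ q.2 :=
  ⟨fun h => (hray.2.2 q hq).1 h.symm, fun h => (hray.2.2 q hq).2 h.symm⟩

lemma disj_rays_DE : Disjoint M.raysF M.DE := by
  rw [Finset.disjoint_left]
  intro x hx hxDE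
  obtain ⟨d, hd, hor⟩ := M.mem_DE.1 hxDE
  have := M.ray_not_endpoint (M.mem_raysF.1 hx) (M.dotted_subset hd)
  tauto

lemma disj_fst_snd_dotted {s : Finset (ℕ × ℕ)} (hs : s ⊆ M.arcs) :
    Disjoint (s.image Prod.fst) (s.image Prod.snd) := by
  rw [Finset.disjoint_left]
  intro x hx1 hx2
  obtain ⟨q, hq, rfl⟩ := Finset.mem_image.1 hx1
  obtain ⟨q', hq', he⟩ := Finset.mem_image.1 hx2
  by_cases hqq : q = q'
  · subst hqq
    exact absurd he (ne_of_gt (M.arc_lt (hs hq)))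
  · exact (M.endpoints_distinct q (hs hq) q' (hs hq') hqq).2.1 he.symm

lemma card_DE : M.DE.card = 2 * M.dotted.card := by
  rw [DE, Finset.card_union_of_disjoint (M.disj_fst_snd_dotted M.dotted_subset),
    M.card_image_fst M.dotted_subset, M.card_image_snd M.dotted_subset]
  omega

lemma m_le_k {m : ℕ} (hcard : (M.arcs \ M.dotted).card = m) : m ≤ k := by
  have := Finset.card_le_card (Finset.sdiff_subset (s := M.arcs) (t := M.dotted))
  rw [hcard, M.card_arcs] at this
  exact this

lemma C_eq (hstd : M.IsStandard) {m : ℕ} (hcard : (M.arcs \ M.dotted).card = m) :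
    (M.toG m hcard).C = M.raysF ∪ M.DE := by
  ext x
  rw [M.mem_C_iff hstd hcard, Finset.mem_union, M.mem_raysF, M.mem_DE]

lemma card_raysF (hstd : M.IsStandard) {m : ℕ} (hcard : (M.arcs \ M.dotted).card = m)
    (hk : 2*k ≤ n) : M.raysF.card = n - 2*k := by
  have h1 := (M.toG m hcard).card_C
  rw [M.C_eq hstd hcard, Finset.card_union_of_disjoint M.disj_rays_DE, M.card_DE,
    M.card_dotted hcard] at h1
  have := M.m_le_k hcard
  omega

lemma dlt_sets (hstd : M.IsStandard) {m : ℕ} (hcard : (M.arcs \ M.dotted).card = m)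
    {d : ℕ × ℕ} (hd : d ∈ M.dotted) :
    ((M.toG m hcard).C.filter (· < d.1)
        = M.raysF ∪ ((M.dotted.filter (fun d' => d'.2 < d.1)).image Prod.fst
            ∪ (M.dotted.filter (fun d' => d'.2 < d.1)).image Prod.snd))
    ∧ ((M.toG m hcard).C.filter (· < d.2)
        = insert d.1 (M.raysF ∪ ((M.dotted.filter (fun d' => d'.2 < d.1)).image Prod.fst
            ∪ (M.dotted.filter (fun d' => d'.2 < d.1)).image Prod.snd))) := by
  have hdlt := M.arc_lt (M.dotted_subset hd)
  have hmemE2 : ∀ x, x ∈ M.raysF ∪ ((M.dotted.filter (fun d' => d'.2 < d.1)).image Prod.fst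
      ∪ (M.dotted.filter (fun d' => d'.2 < d.1)).image Prod.snd)
      → x ∈ (M.toG m hcard).C ∧ x < d.1 := by
    intro x hx
    rcases Finset.mem_union.1 hx with h | h
    · exact ⟨(M.mem_C_iff hstd hcard).2 (Or.inl (M.mem_raysF.1 h)),
        M.ray_lt_dotted hstd (M.mem_raysF.1 h) hd⟩
    · rcases Finset.mem_union.1 h with h' | h'
      · obtain ⟨d', hd', rfl⟩ := Finset.mem_image.1 h'
        obtain ⟨hd'd, hlt⟩ := Finset.mem_filter.1 hd'
        have := M.arc_lt (M.dotted_subset hd'd)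
        exact ⟨(M.mem_C_iff hstd hcard).2 (Or.inr ⟨d', hd'd, Or.inl rfl⟩), by omega⟩
      · obtain ⟨d', hd', rfl⟩ := Finset.mem_image.1 h'
        obtain ⟨hd'd, hlt⟩ := Finset.mem_filter.1 hd'
        exact ⟨(M.mem_C_iff hstd hcard).2 (Or.inr ⟨d', hd'd, Or.inr rfl⟩), hlt⟩
  have hclass : ∀ x, x ∈ (M.toG m hcard).C → x < d.2 →
      (x = d.1 ∨ x ∈ M.raysF ∪ ((M.dotted.filter (fun d' => d'.2 < d.1)).image Prod.fst
          ∪ (M.dotted.filter (fun d' => d'.2 < d.1)).image Prod.snd)) := by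
    intro x hx hxlt
    rcases (M.mem_C_iff hstd hcard).1 hx with h | ⟨d', hd', hor⟩
    · exact Or.inr (Finset.mem_union_left _ (M.mem_raysF.2 h))
    · by_cases hdd : d' = d
      · subst hdd
        rcases hor with h | h
        · exact Or.inl h
        · omega
      · rcases M.dotted_order hstd hd hd' (fun h => hdd h.symm) with h | h
        · refine Or.inr (Finset.mem_union_right _ ?_)
          rcases hor with rfl | rfl
          · exact Finset.mem_union_left _
              (Finset.mem_image_of_mem _ (Finset.mem_filter.2 ⟨hd', h⟩))
          · exact Finset.mem_union_right _
              (Finset.mem_image_of_mem _ (Finset.mem_filter.2 ⟨hd', h⟩))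
        · exfalso
          have := M.arc_lt (M.dotted_subset hd')
          rcases hor with rfl | rfl <;> omega
  constructor
  · ext x
    rw [Finset.mem_filter]
    constructor
    · rintro ⟨hx, hlt⟩
      rcases hclass x hx (by omega) with h | h
      · omega
      · exact h
    · intro hx
      exact hmemE2 x hx
  · ext x
    rw [Finset.mem_filter, Finset.mem_insert]
    constructor
    · rintro ⟨hx, hlt⟩
      exact hclass x hx hlt
    · rintro (rfl | hx)
      · exact ⟨(M.mem_C_iff hstd hcard).2 (Or.inr ⟨d, hd, Or.inl rfl⟩), hdlt⟩
      · have := hmemE2 x hx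
        exact ⟨this.1, by omega⟩

lemma dlt_counts (hstd : M.IsStandard) {m : ℕ} (hcard : (M.arcs \ M.dotted).card = m)
    (hk : 2*k ≤ n) {d : ℕ × ℕ} (hd : d ∈ M.dotted) :
    ((M.toG m hcard).C.filter (· < d.1)).card
        = (n - 2*k) + 2 * (M.dotted.filter (fun d' => d'.2 < d.1)).card
    ∧ ((M.toG m hcard).C.filter (· < d.2)).card
        = (n - 2*k) + 2 * (M.dotted.filter (fun d' => d'.2 < d.1)).card + 1 := by
  obtain ⟨h1, h2⟩ := M.dlt_sets hstd hcard hd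
  have hsub : M.dotted.filter (fun d' => d'.2 < d.1) ⊆ M.arcs :=
    le_trans (Finset.filter_subset _ _) M.dotted_subset
  have hdisj1 : Disjoint ((M.dotted.filter (fun d' => d'.2 < d.1)).image Prod.fst)
      ((M.dotted.filter (fun d' => d'.2 < d.1)).image Prod.snd) :=
    M.disj_fst_snd_dotted hsub
  have hdisj2 : Disjoint M.raysF
      (((M.dotted.filter (fun d' => d'.2 < d.1)).image Prod.fst)
        ∪ ((M.dotted.filter (fun d' => d'.2 < d.1)).image Prod.snd)) := by
    rw [Finset.disjoint_left]
    intro x hx hx2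
    rcases Finset.mem_union.1 hx2 with h | h
    · obtain ⟨q, hq, rfl⟩ := Finset.mem_image.1 h
      exact (M.ray_not_endpoint (M.mem_raysF.1 hx) (hsub hq)).1 rfl
    · obtain ⟨q, hq, rfl⟩ := Finset.mem_image.1 h
      exact (M.ray_not_endpoint (M.mem_raysF.1 hx) (hsub hq)).2 rfl
  have hcardE2 : (M.raysF ∪ ((M.dotted.filter (fun d' => d'.2 < d.1)).image Prod.fst
      ∪ (M.dotted.filter (fun d' => d'.2 < d.1)).image Prod.snd)).card
      = (n - 2*k) + 2 * (M.dotted.filter (fun d' => d'.2 < d.1)).card := by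
    rw [Finset.card_union_of_disjoint hdisj2, Finset.card_union_of_disjoint hdisj1,
      M.card_image_fst hsub, M.card_image_snd hsub, M.card_raysF hstd hcard hk]
    omega
  have hd1notin : d.1 ∉ M.raysF ∪ ((M.dotted.filter (fun d' => d'.2 < d.1)).image Prod.fst
      ∪ (M.dotted.filter (fun d' => d'.2 < d.1)).image Prod.snd) := by
    intro hmem
    rcases Finset.mem_union.1 hmem with h | h
    · exact (M.ray_not_endpoint (M.mem_raysF.1 h) (M.dotted_subset hd)).1 rfl
    · rcases Finset.mem_union.1 h with h' | h' <;>
        obtain ⟨q, hq, he⟩ := Finset.mem_image.1 h'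
      all_goals {
        obtain ⟨hqd, hlt⟩ := Finset.mem_filter.1 hq
        have hne : d ≠ q := by
          rintro rfl
          have := M.arc_lt (M.dotted_subset hd)
          omega
        obtain ⟨a1, a2, a3, a4⟩ := M.endpoints_distinct d (M.dotted_subset hd) q
          (M.dotted_subset hqd) hne
        omega }
  refine ⟨by rw [h1, hcardE2], ?_⟩
  rw [h2, Finset.card_insert_of_notMem hd1notin, hcardE2]

lemma w_lt {m : ℕ} (hcard : (M.arcs \ M.dotted).card = m) {d : ℕ × ℕ}
    (hd : d ∈ M.dotted) :
    (M.dotted.filter (fun d' => d'.2 < d.1)).card < k - m := by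
  have hsub : M.dotted.filter (fun d' => d'.2 < d.1) ⊆ M.dotted.erase d := by
    intro q hq
    obtain ⟨hqd, hlt⟩ := Finset.mem_filter.1 hq
    refine Finset.mem_erase.2 ⟨?_, hqd⟩
    rintro rfl
    have := M.arc_lt (M.dotted_subset hd)
    omega
  have h1 := Finset.card_le_card hsub
  rw [Finset.card_erase_of_mem hd, M.card_dotted hcard] at h1
  have h2 : 1 ≤ M.dotted.card := Finset.card_pos.2 ⟨d, hd⟩
  rw [M.card_dotted hcard] at h2
  omega

lemma dotted_eq_D (hstd : M.IsStandard) {m : ℕ} (hcard : (M.arcs \ M.dotted).card = m)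
    (hk : 2*k ≤ n) (hm : m ≤ k) :
    M.dotted = (M.toG m hcard).D k ((M.toG m hcard).hcardC k hk hm) := by
  set G' := M.toG m hcard with hG'
  have hsub : M.dotted ⊆ G'.D k (G'.hcardC k hk hm) := by
    intro d hd
    obtain ⟨hc1, hc2⟩ := M.dlt_counts hstd hcard hk hd
    have hw := M.w_lt hcard hd
    have he1 : G'.ce k (G'.hcardC k hk hm)
        (n - 2*k + 2 * (M.dotted.filter (fun d' => d'.2 < d.1)).card) = d.1 :=
      G'.ce_of_count k _ ((M.mem_C_iff hstd hcard).2 (Or.inr ⟨d, hd, Or.inl rfl⟩))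
        (by omega) hc1
    have he2 : G'.ce k (G'.hcardC k hk hm)
        (n - 2*k + 2 * (M.dotted.filter (fun d' => d'.2 < d.1)).card + 1) = d.2 :=
      G'.ce_of_count k _ ((M.mem_C_iff hstd hcard).2 (Or.inr ⟨d, hd, Or.inr rfl⟩))
        (by omega) hc2
    refine (G'.mem_D k _).2 ⟨(M.dotted.filter (fun d' => d'.2 < d.1)).card, hw, ?_⟩
    rw [he1, he2]
  exact Finset.eq_of_subset_of_card_le hsub
    (le_of_eq (by rw [G'.card_D k _, M.card_dotted hcard]))

/-- Round trip: reconstructing the matching from its ballot set. -/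
lemma toM_toG (hstd : M.IsStandard) (hcard : (M.arcs \ M.dotted).card = m)
    (hk : 2*k ≤ n) (hm : m ≤ k) : (M.toG m hcard).toM k hk hm = M := by
  apply DottedNCM.ext'
  · show (M.toG m hcard).U ∪ (M.toG m hcard).D k _ = M.arcs
    rw [M.U_toG hstd hcard, ← M.dotted_eq_D hstd hcard hk hm]
    exact Finset.sdiff_union_of_subset M.dotted_subset
  · show (M.toG m hcard).D k _ = M.dotted
    rw [← M.dotted_eq_D hstd hcard hk hm]

end DottedNCM

/-- Round trip the other way. -/
lemma GoodB.toG_toM {n m : ℕ} (G : GoodB n m) (k : ℕ) (hk : 2*k ≤ n) (hm : m ≤ k)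
    (hcard : ((G.toM k hk hm).arcs \ (G.toM k hk hm).dotted).card = m) :
    (G.toM k hk hm).toG m hcard = G := by
  apply GoodB.ext'
  show ((G.toM k hk hm).arcs \ (G.toM k hk hm).dotted).image Prod.snd = G.B
  rw [G.toM_undotted k hk hm]
  exact G.U_snd_image

namespace GoodB

variable {n m : ℕ} (G : GoodB n m)

lemma cardT : (Finset.Icc 1 n \ G.B).card = n - m := by
  rw [Finset.card_sdiff_of_subset G.subset, G.cardB, Nat.card_Icc]
  omega

/-- the two-row standard Young tableau attached to a ballot set. -/
def syt : TwoRowSYT n m where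
  top := fun i => (Finset.Icc 1 n \ G.B).orderEmbOfFin G.cardT i
  bot := fun i => G.B.orderEmbOfFin G.cardB i
  top_mono := ((Finset.Icc 1 n \ G.B).orderEmbOfFin G.cardT).strictMono
  bot_mono := (G.B.orderEmbOfFin G.cardB).strictMono
  rows_disjoint := by
    intro i j he
    have h1 := Finset.orderEmbOfFin_mem (Finset.Icc 1 n \ G.B) G.cardT i
    have h2 := Finset.orderEmbOfFin_mem G.B G.cardB j
    have he' : (Finset.Icc 1 n \ G.B).orderEmbOfFin G.cardT i
        = G.B.orderEmbOfFin G.cardB j := he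
    rw [he'] at h1
    exact (Finset.mem_sdiff.1 h1).2 h2
  range_top := by
    intro i
    have h1 := Finset.orderEmbOfFin_mem (Finset.Icc 1 n \ G.B) G.cardT i
    have := Finset.mem_Icc.1 (Finset.mem_sdiff.1 h1).1
    exact this
  range_bot := by
    intro i
    exact Finset.mem_Icc.1 (G.subset (Finset.orderEmbOfFin_mem G.B G.cardB i))
  cover := by
    intro v h1 h2
    by_cases hv : v ∈ G.B
    · right
      have : v ∈ Set.range (G.B.orderEmbOfFin G.cardB) := by
        rw [Finset.range_orderEmbOfFin]; exact_mod_cast hv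
      exact this
    · left
      have : v ∈ Set.range ((Finset.Icc 1 n \ G.B).orderEmbOfFin G.cardT) := by
        rw [Finset.range_orderEmbOfFin]
        exact_mod_cast Finset.mem_sdiff.2 ⟨Finset.mem_Icc.2 ⟨h1, h2⟩, hv⟩
      exact this
  col_incr := by
    intro i h
    show (Finset.Icc 1 n \ G.B).orderEmbOfFin G.cardT ⟨i, h⟩ < G.B.orderEmbOfFin G.cardB i
    set v := G.B.orderEmbOfFin G.cardB i with hv
    have hvB : v ∈ G.B := Finset.orderEmbOfFin_mem G.B G.cardB i
    have hv1 : 1 ≤ v := (Finset.mem_Icc.1 (G.subset hvB)).1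
    have hvn : v ≤ n := (Finset.mem_Icc.1 (G.subset hvB)).2
    have hcount : (G.B.filter (· < v)).card = i := orderEmb_count G.B G.cardB i
    have hBIcc : G.B ∩ Finset.Icc 1 v = insert v (G.B.filter (· < v)) := by
      ext z
      simp only [Finset.mem_inter, Finset.mem_Icc, Finset.mem_insert, Finset.mem_filter]
      constructor
      · rintro ⟨hz, h1, h2⟩
        rcases eq_or_lt_of_le h2 with h' | h'
        · exact Or.inl h'
        · exact Or.inr ⟨hz, h'⟩
      · rintro (rfl | ⟨hz, hlt⟩)
        · exact ⟨hvB, hv1, le_rfl⟩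
        · exact ⟨hz, (Finset.mem_Icc.1 (G.subset hz)).1, by omega⟩
    have hcardB : (G.B ∩ Finset.Icc 1 v).card = i + 1 := by
      rw [hBIcc, Finset.card_insert_of_notMem (by simp), hcount]
    have hballot := G.ballot v hvB
    rw [hcardB] at hballot
    -- now count the complement below `v`
    have hsplit : Finset.Icc 1 (v-1)
        = (G.B.filter (· < v)) ∪ ((Finset.Icc 1 n \ G.B).filter (· < v)) := by
      ext z
      simp only [Finset.mem_Icc, Finset.mem_union, Finset.mem_filter, Finset.mem_sdiff]
      constructor
      · rintro ⟨h1, h2⟩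
        by_cases hz : z ∈ G.B
        · exact Or.inl ⟨hz, by omega⟩
        · exact Or.inr ⟨⟨⟨h1, by omega⟩, hz⟩, by omega⟩
      · rintro (⟨hz, hlt⟩ | ⟨⟨⟨hz1, hz2⟩, -⟩, hlt⟩)
        · exact ⟨(Finset.mem_Icc.1 (G.subset hz)).1, by omega⟩
        · exact ⟨hz1, by omega⟩
    have hdisj : Disjoint (G.B.filter (· < v)) ((Finset.Icc 1 n \ G.B).filter (· < v)) := by
      rw [Finset.disjoint_left]
      intro z hz1 hz2
      exact (Finset.mem_sdiff.1 (Finset.mem_filter.1 hz2).1).2 (Finset.mem_filter.1 hz1).1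
    have hcardsplit : v - 1 = i + ((Finset.Icc 1 n \ G.B).filter (· < v)).card := by
      have := congrArg Finset.card hsplit
      rwa [Nat.card_Icc, Finset.card_union_of_disjoint hdisj, hcount,
        show v - 1 + 1 - 1 = v - 1 from by omega] at this
    by_contra hcon
    push_neg at hcon
    have hcount2 : ((Finset.Icc 1 n \ G.B).filter
        (· < (Finset.Icc 1 n \ G.B).orderEmbOfFin G.cardT ⟨i, h⟩)).card = i :=
      orderEmb_count _ G.cardT ⟨i, h⟩
    have hsubf : (Finset.Icc 1 n \ G.B).filter (· < v)
        ⊆ (Finset.Icc 1 n \ G.B).filter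
          (· < (Finset.Icc 1 n \ G.B).orderEmbOfFin G.cardT ⟨i, h⟩) := by
      intro z hz
      rw [Finset.mem_filter] at hz ⊢
      exact ⟨hz.1, by omega⟩
    have := Finset.card_le_card hsubf
    rw [hcount2] at this
    omega

lemma syt_bot_eq (i : Fin m) : G.syt.bot i = G.B.orderEmbOfFin G.cardB i := rfl

lemma syt_bot_mem_iff {v : ℕ} : (∃ i, G.syt.bot i = v) ↔ v ∈ G.B := by
  constructor
  · rintro ⟨i, rfl⟩
    exact Finset.orderEmbOfFin_mem G.B G.cardB i
  · intro hv
    have : v ∈ Set.range (G.B.orderEmbOfFin G.cardB) := by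
      rw [Finset.range_orderEmbOfFin]; exact_mod_cast hv
    exact this

end GoodB

lemma TwoRowSYT.ext' {n m : ℕ} {T T' : TwoRowSYT n m} (h1 : T.top = T'.top)
    (h2 : T.bot = T'.bot) : T = T' := by
  cases T; cases T'
  simp only at h1 h2
  subst h1; subst h2
  rfl

namespace TwoRowSYT

variable {n m : ℕ} (T : TwoRowSYT n m)

/-- the ballot set attached to a two-row SYT. -/
def toG (hmn : 2*m ≤ n) : GoodB n m where
  B := Finset.univ.image T.bot
  subset := by
    intro b hb
    obtain ⟨i, -, rfl⟩ := Finset.mem_image.1 hb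
    exact Finset.mem_Icc.2 (T.range_bot i)
  cardB := by
    rw [Finset.card_image_of_injective _ T.bot_mono.injective, Finset.card_univ,
      Fintype.card_fin]
  ballot := by
    intro b hb
    set B := Finset.univ.image T.bot with hBdef
    have hBcard : B.card = m := by
      rw [hBdef, Finset.card_image_of_injective _ T.bot_mono.injective, Finset.card_univ,
        Fintype.card_fin]
    have hbotmem : ∀ x, T.bot x ∈ B := fun x => Finset.mem_image.2 ⟨x, Finset.mem_univ x, rfl⟩
    have hbot : T.bot = B.orderEmbOfFin hBcard :=
      Finset.orderEmbOfFin_unique hBcard hbotmem T.bot_mono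
    obtain ⟨i, -, rfl⟩ := Finset.mem_image.1 hb
    have hcount : (B.filter (· < T.bot i)).card = i := by
      conv_lhs => rw [hbot]
      exact orderEmb_count B hBcard i
    have h1b : 1 ≤ T.bot i := (T.range_bot i).1
    have hBIcc : B ∩ Finset.Icc 1 (T.bot i) = insert (T.bot i) (B.filter (· < T.bot i)) := by
      ext z
      simp only [Finset.mem_inter, Finset.mem_Icc, Finset.mem_insert, Finset.mem_filter]
      constructor
      · rintro ⟨hz, h1, h2⟩
        rcases eq_or_lt_of_le h2 with h' | h'
        · exact Or.inl h'
        · exact Or.inr ⟨hz, h'⟩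
      · rintro (rfl | ⟨hz, hlt⟩)
        · exact ⟨hbotmem i, h1b, le_rfl⟩
        · obtain ⟨j, -, rfl⟩ := Finset.mem_image.1 hz
          exact ⟨hz, (T.range_bot j).1, by omega⟩
    have hcardB : (B ∩ Finset.Icc 1 (T.bot i)).card = i + 1 := by
      rw [hBIcc, Finset.card_insert_of_notMem (by simp), hcount]
    rw [hcardB]
    -- now produce `2 * (i+1)` distinct elements of `Icc 1 (bot i)`
    have hi_lt : (i : ℕ) < n - m := by omega
    have hcol := T.col_incr i hi_lt
    set S1 := (Finset.Iic i).image T.bot with hS1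
    set S2 := (Finset.Iic (⟨i, hi_lt⟩ : Fin (n-m))).image T.top with hS2
    have hc1 : S1.card = i + 1 := by
      rw [hS1, Finset.card_image_of_injective _ T.bot_mono.injective, Fin.card_Iic]
    have hc2 : S2.card = i + 1 := by
      rw [hS2, Finset.card_image_of_injective _ T.top_mono.injective, Fin.card_Iic]
    have hdisj : Disjoint S1 S2 := by
      rw [Finset.disjoint_left]
      intro z hz1 hz2
      obtain ⟨j1, -, rfl⟩ := Finset.mem_image.1 hz1
      obtain ⟨j2, -, he⟩ := Finset.mem_image.1 hz2
      exact T.rows_disjoint j2 j1 he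
    have hsub : S1 ∪ S2 ⊆ Finset.Icc 1 (T.bot i) := by
      intro z hz
      rcases Finset.mem_union.1 hz with h | h
      · obtain ⟨j, hj, rfl⟩ := Finset.mem_image.1 h
        have := T.bot_mono.monotone (Finset.mem_Iic.1 hj)
        exact Finset.mem_Icc.2 ⟨(T.range_bot j).1, this⟩
      · obtain ⟨j, hj, rfl⟩ := Finset.mem_image.1 h
        have := T.top_mono.monotone (Finset.mem_Iic.1 hj)
        exact Finset.mem_Icc.2 ⟨(T.range_top j).1, by omega⟩
    have := Finset.card_le_card hsub
    rw [Finset.card_union_of_disjoint hdisj, hc1, hc2, Nat.card_Icc] at this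
    omega

lemma toG_syt (hmn : 2*m ≤ n) : (T.toG hmn).syt = T := by
  set G := T.toG hmn with hG
  have hBdef : G.B = Finset.univ.image T.bot := rfl
  have hbotmem : ∀ x, T.bot x ∈ G.B :=
    fun x => Finset.mem_image.2 ⟨x, Finset.mem_univ x, rfl⟩
  have hbot : T.bot = G.B.orderEmbOfFin G.cardB :=
    Finset.orderEmbOfFin_unique G.cardB hbotmem T.bot_mono
  have htopmem : ∀ x, T.top x ∈ Finset.Icc 1 n \ G.B := by
    intro x
    refine Finset.mem_sdiff.2 ⟨Finset.mem_Icc.2 (T.range_top x), ?_⟩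
    intro hmem
    obtain ⟨j, -, he⟩ := Finset.mem_image.1 hmem
    exact T.rows_disjoint x j he.symm
  have htop : T.top = (Finset.Icc 1 n \ G.B).orderEmbOfFin G.cardT :=
    Finset.orderEmbOfFin_unique G.cardT htopmem T.top_mono
  apply TwoRowSYT.ext'
  · exact htop.symm
  · exact hbot.symm

end TwoRowSYT

lemma GoodB.syt_toG {n m : ℕ} (G : GoodB n m) (hmn : 2*m ≤ n) :
    G.syt.toG hmn = G := by
  apply GoodB.ext'
  show Finset.univ.image G.syt.bot = G.B
  ext v
  constructor
  · intro hv
    obtain ⟨i, -, rfl⟩ := Finset.mem_image.1 hv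
    exact G.syt_bot_mem_iff.1 ⟨i, rfl⟩
  · intro hv
    obtain ⟨i, hi⟩ := G.syt_bot_mem_iff.2 hv
    exact Finset.mem_image.2 ⟨i, Finset.mem_univ i, hi⟩

/-- The standard dotted noncrossing matchings of type `(n-k,k)` with `m` undotted arcs are
in bijection with standard Young tableaux of shape `(n-m,m)`, by sending `M` to the tableau
whose bottom row consists of the right endpoints of the undotted arcs of `M`. -/
theorem standard_dotted_matchings_biject_SYT (n k m : ℕ) (hk : 2 * k ≤ n) (hm : m ≤ k) :
    ∃ Φ : {M : DottedNCM n k // M.IsStandard ∧ (M.arcs \ M.dotted).card = m} →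
        TwoRowSYT n m,
      Function.Bijective Φ ∧
      ∀ M, ∀ v : ℕ, (∃ i, (Φ M).bot i = v) ↔ ∃ q ∈ M.1.arcs \ M.1.dotted, q.2 = v := by
  have hmn : 2 * m ≤ n := by omega
  refine ⟨fun M => (M.1.toG m M.2.2).syt, ⟨?_, ?_⟩, ?_⟩
  · -- injective
    intro M M' he
    have h1 : (M.1.toG m M.2.2).syt.toG hmn = M.1.toG m M.2.2 :=
      (M.1.toG m M.2.2).syt_toG hmn
    have h2 : (M'.1.toG m M'.2.2).syt.toG hmn = M'.1.toG m M'.2.2 :=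
      (M'.1.toG m M'.2.2).syt_toG hmn
    have he' : (M.1.toG m M.2.2).syt = (M'.1.toG m M'.2.2).syt := he
    have hG : M.1.toG m M.2.2 = M'.1.toG m M'.2.2 := by
      rw [← h1, ← h2, he']
    apply Subtype.ext
    calc M.1 = (M.1.toG m M.2.2).toM k hk hm := (M.1.toM_toG M.2.1 M.2.2 hk hm).symm
      _ = (M'.1.toG m M'.2.2).toM k hk hm := by rw [hG]
      _ = M'.1 := M'.1.toM_toG M'.2.1 M'.2.2 hk hm
  · -- surjective
    intro T
    refine ⟨⟨(T.toG hmn).toM k hk hm,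
      (T.toG hmn).toM_standard k hk hm, (T.toG hmn).toM_card_undotted k hk hm⟩, ?_⟩
    show (((T.toG hmn).toM k hk hm).toG m _).syt = T
    rw [GoodB.toG_toM]
    exact T.toG_syt hmn
  · -- the bottom row consists of right endpoints of undotted arcs
    intro M v
    exact ((M.1.toG m M.2.2).syt_bot_mem_iff).trans M.1.mem_BM
end

section
/- Let a be the perfect noncrossing matching on n points (n even) with arcs (1,2),(3,4),…,(n−1,n), and b the matching with arcs (2,3),(4,5),…,(n−2,n−1),(1,n). Then there is a sequence of n/2 − 1 moves, each of the form → (replacing two unnested arcs by two nested arcs on the same four vertices), transforming a into b; moreover n/2 − 1 is the minimal number of moves needed. -/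
/-- The adjacency relation on vertices coming from the glued one-manifold `a w(b)`:
two vertices are related if an arc of `a` or an arc of (the reflection of) `b` joins them. -/
def glueRel {n k : ℕ} (a b : NCMatching n k) (i j : ℕ) : Prop :=
  (i, j) ∈ a.arcs ∨ (j, i) ∈ a.arcs ∨ (i, j) ∈ b.arcs ∨ (j, i) ∈ b.arcs

/-- Two vertices lie on the same connected component of `a w(b)`. -/
def Conn {n k : ℕ} (a b : NCMatching n k) : ℕ → ℕ → Prop :=
  Relation.ReflTransGen (glueRel a b)

/-- The glue relation transported to `Fin n` (the vertex `i : Fin n` has label `i+1`). -/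
def glueRelF {n k : ℕ} (a b : NCMatching n k) (i j : Fin n) : Prop :=
  glueRel a b ((i : ℕ) + 1) ((j : ℕ) + 1)

/-- `comps a b = |a w(b)|`, the number of connected components (circles and line
segments) of the glued one-manifold `a w(b)`. -/
noncomputable def comps {n k : ℕ} (a b : NCMatching n k) : ℕ :=
  Nat.card (Quot (glueRelF a b))

/-- The elementary move `a → b`: either two unnested arcs `(i,j), (l,m)` of `a` are replaced
by the nested arcs `(i,m), (j,l)` on the same four vertices, or an arc-ray pair
`(i), (j,l)` with `i<j<l` is replaced by `(i,j), (l)`; the matchings agree elsewhere. -/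
def Move {n k : ℕ} (a b : NCMatching n k) : Prop :=
  (∃ i j l m : ℕ, i < j ∧ j < l ∧ l < m ∧ (i, j) ∈ a.arcs ∧ (l, m) ∈ a.arcs ∧
    b.arcs = insert (i, m) (insert (j, l) ((a.arcs.erase (i, j)).erase (l, m)))) ∨
  (∃ i j l : ℕ, i < j ∧ j < l ∧ a.IsRay i ∧ (j, l) ∈ a.arcs ∧
    b.arcs = insert (i, j) (a.arcs.erase (j, l)))

/-- A sequence of matchings in which each consecutive pair is related by `→` or `←`. -/
def IsMoveSeq {n k d : ℕ} (f : Fin (d + 1) → NCMatching n k) : Prop :=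
  ∀ i : Fin d, Move (f i.castSucc) (f i.succ) ∨ Move (f i.succ) (f i.castSucc)

/-- The distance `d(a,b)`: the minimal number of moves `→` or `←` needed to go from `a` to `b`. -/
noncomputable def mdist {n k : ℕ} (a b : NCMatching n k) : ℕ :=
  sInf {d : ℕ | ∃ f : Fin (d + 1) → NCMatching n k,
    f 0 = a ∧ f (Fin.last d) = b ∧ IsMoveSeq f}
open Relation

set_option linter.unusedSectionVars false

section QuotLemmas
variable {α : Type*} [Finite α]

lemma card_quot_le_of_imp {r s : α → α → Prop}
    (h : ∀ a b, s a b → Quot.mk r a = Quot.mk r b) :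
    Nat.card (Quot r) ≤ Nat.card (Quot s) := by
  have : Finite (Quot s) := Finite.of_surjective (Quot.mk s) Quot.mk_surjective
  refine Nat.card_le_card_of_surjective (Quot.lift (Quot.mk r) h) ?_
  intro q
  obtain ⟨x, rfl⟩ := Quot.mk_surjective q
  exact ⟨Quot.mk s x, rfl⟩

lemma eqvGen_add_pair {r : α → α → Prop} {x y u v : α}
    (h : EqvGen (fun a b => r a b ∨ (a = x ∧ b = y)) u v) :
    EqvGen r u v ∨ ((EqvGen r u x ∨ EqvGen r u y) ∧ (EqvGen r v x ∨ EqvGen r v y)) := by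
  induction h with
  | rel a b hab =>
    rcases hab with hab | ⟨rfl, rfl⟩
    · exact Or.inl (EqvGen.rel _ _ hab)
    · exact Or.inr ⟨Or.inl (EqvGen.refl _), Or.inr (EqvGen.refl _)⟩
  | refl a => exact Or.inl (EqvGen.refl _)
  | symm a b _ ih =>
    rcases ih with h | ⟨h1, h2⟩
    · exact Or.inl (EqvGen.symm _ _ h)
    · exact Or.inr ⟨h2, h1⟩
  | trans a b c _ _ ih1 ih2 =>
    rcases ih1 with h1 | ⟨h1, h1'⟩
    · rcases ih2 with h2 | ⟨h2, h2'⟩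
      · exact Or.inl (EqvGen.trans _ _ _ h1 h2)
      · refine Or.inr ⟨?_, h2'⟩
        rcases h2 with h2 | h2
        · exact Or.inl (EqvGen.trans _ _ _ h1 h2)
        · exact Or.inr (EqvGen.trans _ _ _ h1 h2)
    · rcases ih2 with h2 | ⟨h2, h2'⟩
      · refine Or.inr ⟨h1, ?_⟩
        rcases h1' with h1' | h1'
        · exact Or.inl (EqvGen.trans _ _ _ (EqvGen.symm _ _ h2) h1')
        · exact Or.inr (EqvGen.trans _ _ _ (EqvGen.symm _ _ h2) h1')
      · exact Or.inr ⟨h1, h2'⟩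

lemma card_quot_le_add_pair (r : α → α → Prop) (x y : α) :
    Nat.card (Quot r) ≤ Nat.card (Quot (fun a b => r a b ∨ (a = x ∧ b = y))) + 1 := by
  classical
  set s := fun a b => r a b ∨ (a = x ∧ b = y) with hs
  have : Finite (Quot s) := Finite.of_surjective (Quot.mk s) Quot.mk_surjective
  have : Finite (Quot s ⊕ Unit) := by infer_instance
  have φdef : ∀ a b, r a b → Quot.mk s a = Quot.mk s b := fun a b hab =>
    Quot.sound (Or.inl hab)
  let φ : Quot r → Quot s := Quot.lift (Quot.mk s) φdef
  let F : Quot r → Quot s ⊕ Unit := fun c =>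
    if c = Quot.mk r x then Sum.inr () else Sum.inl (φ c)
  have hinj : Function.Injective F := by
    intro c1 c2 hF
    by_cases h1 : c1 = Quot.mk r x <;> by_cases h2 : c2 = Quot.mk r x
    · rw [h1, h2]
    · exfalso; simp only [F, if_pos h1, if_neg h2] at hF; cases hF
    · exfalso; simp only [F, if_neg h1, if_pos h2] at hF; cases hF
    · simp only [F, if_neg h1, if_neg h2, Sum.inl.injEq] at hF
      obtain ⟨u1, rfl⟩ := Quot.mk_surjective c1
      obtain ⟨u2, rfl⟩ := Quot.mk_surjective c2
      have : Quot.mk s u1 = Quot.mk s u2 := hF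
      have hd := eqvGen_add_pair (r := r) (x := x) (y := y) (Quot.eqvGen_exact this)
      rcases hd with h | ⟨hl, hr⟩
      · exact Quot.eqvGen_sound h
      · rcases hl with hl | hl
        · exact absurd (Quot.eqvGen_sound hl) h1
        · rcases hr with hr2 | hr2
          · exact absurd (Quot.eqvGen_sound hr2) h2
          · exact (Quot.eqvGen_sound hl).trans (Quot.eqvGen_sound hr2).symm
  calc Nat.card (Quot r) ≤ Nat.card (Quot s ⊕ Unit) := Nat.card_le_card_of_injective F hinj
    _ = Nat.card (Quot s) + 1 := by rw [Nat.card_sum]; simp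

/-- Precomposing with a swap changes the class count of the orbit relation by at most 1. -/
lemma card_quot_orbit_swap_le [DecidableEq α] (f : α → α) (x y : α) :
    Nat.card (Quot (fun a b : α => f a = b)) ≤
      Nat.card (Quot (fun a b : α => f (Equiv.swap x y a) = b)) + 1 := by
  set r := fun a b : α => f a = b with hr
  set r' := fun a b : α => f (Equiv.swap x y a) = b with hr'
  set radd := fun a b : α => r a b ∨ (a = x ∧ b = y) with hradd
  have step1 : Nat.card (Quot r) ≤ Nat.card (Quot radd) + 1 :=
    card_quot_le_add_pair r x y
  have step2 : Nat.card (Quot radd) ≤ Nat.card (Quot r') := by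
    apply card_quot_le_of_imp
    rintro a b hb
    have hfb : b = f (Equiv.swap x y a) := hb.symm
    subst hfb
    by_cases hax : a = x
    · subst hax
      have h1 : Quot.mk radd a = Quot.mk radd y := Quot.sound (Or.inr ⟨rfl, rfl⟩)
      have h2 : Quot.mk radd y = Quot.mk radd (f y) := Quot.sound (Or.inl rfl)
      rw [Equiv.swap_apply_left]
      exact h1.trans h2
    · by_cases hay : a = y
      · subst hay
        have h1 : Quot.mk radd x = Quot.mk radd a := Quot.sound (Or.inr ⟨rfl, rfl⟩)
        have h2 : Quot.mk radd x = Quot.mk radd (f x) := Quot.sound (Or.inl rfl)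
        rw [Equiv.swap_apply_right]
        exact h1.symm.trans h2
      · rw [Equiv.swap_apply_of_ne_of_ne hax hay]
        exact Quot.sound (Or.inl rfl)
  omega

/-- reverse direction -/
lemma card_quot_orbit_swap_ge [DecidableEq α] (f : α → α) (x y : α) :
    Nat.card (Quot (fun a b : α => f (Equiv.swap x y a) = b)) ≤
      Nat.card (Quot (fun a b : α => f a = b)) + 1 := by
  have h := card_quot_orbit_swap_le (fun a => f (Equiv.swap x y a)) x y
  simp only [Equiv.swap_apply_self] at h
  exact h

/-- both directions: two swaps change class count by at most 2. -/
lemma card_quot_orbit_two_swaps [DecidableEq α] (f : α → α) (x y z w : α) :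
    Nat.card (Quot (fun a b : α => f a = b)) ≤
      Nat.card (Quot (fun a b : α => f (Equiv.swap x y (Equiv.swap z w a)) = b)) + 2 ∧
    Nat.card (Quot (fun a b : α => f (Equiv.swap x y (Equiv.swap z w a)) = b)) ≤
      Nat.card (Quot (fun a b : α => f a = b)) + 2 := by
  have h1 := card_quot_orbit_swap_le f x y
  have h2 := card_quot_orbit_swap_le (fun a => f (Equiv.swap x y a)) z w
  have h3 := card_quot_orbit_swap_ge (fun a => f (Equiv.swap x y a)) z w
  have h4 := card_quot_orbit_swap_ge f x y
  exact ⟨by omega, by omega⟩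

end QuotLemmas

/-- partner function of a finite set of arcs -/
def pfn (S : Finset (ℕ × ℕ)) (x : ℕ) : ℕ :=
  S.sum fun p => if p.1 = x then p.2 else if p.2 = x then p.1 else 0

namespace NCMatching
variable {n k : ℕ} (c : NCMatching n k)

lemma pfn_zero {u v : ℕ} (hc : (u, v) ∈ c.arcs) {x : ℕ} (hx : ∀ p ∈ c.arcs, p.1 ≠ x ∧ p.2 ≠ x) :
    pfn c.arcs x = 0 := by
  apply Finset.sum_eq_zero
  intro p hp
  rcases hx p hp with ⟨h1, h2⟩
  simp [h1, h2]

lemma pfn_fst {u v : ℕ} (hc : (u, v) ∈ c.arcs) : pfn c.arcs u = v := by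
  rw [pfn, Finset.sum_eq_single_of_mem (u, v) hc]
  · simp
  · intro q hq hne
    rcases c.endpoints_distinct q hq (u, v) hc hne with ⟨h1, h2, h3, h4⟩
    simp only at h1 h2 h3 h4 ⊢
    rw [if_neg h1, if_neg h3]

lemma pfn_snd {u v : ℕ} (hc : (u, v) ∈ c.arcs) : pfn c.arcs v = u := by
  have huv : u < v := (c.mem_range _ hc).2.1
  rw [pfn, Finset.sum_eq_single_of_mem (u, v) hc]
  · simp only
    rw [if_neg (by omega)]
    simp
  · intro q hq hne
    rcases c.endpoints_distinct q hq (u, v) hc hne with ⟨h1, h2, h3, h4⟩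
    simp only at h1 h2 h3 h4 ⊢
    rw [if_neg h2, if_neg h4]

end NCMatching

section Cover
variable {m : ℕ} (c : NCMatching (2 * m) m)

/-- every vertex of a perfect matching is covered -/
lemma NCMatching.cover {x : ℕ} (hx1 : 1 ≤ x) (hx2 : x ≤ 2 * m) :
    ∃ p ∈ c.arcs, x = p.1 ∨ x = p.2 := by
  classical
  set E := c.arcs.image Prod.fst ∪ c.arcs.image Prod.snd with hE
  have hsub : E ⊆ Finset.Icc 1 (2 * m) := by
    intro z hz
    rw [hE, Finset.mem_union] at hz
    rcases hz with hz | hz <;>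
    · obtain ⟨p, hp, rfl⟩ := Finset.mem_image.mp hz
      rcases c.mem_range p hp with ⟨h1, h2, h3⟩
      exact Finset.mem_Icc.mpr ⟨by omega, by omega⟩
  have hdisj : Disjoint (c.arcs.image Prod.fst) (c.arcs.image Prod.snd) := by
    rw [Finset.disjoint_left]
    intro z hz1 hz2
    obtain ⟨p, hp, hpz⟩ := Finset.mem_image.mp hz1
    obtain ⟨q, hq, hqz⟩ := Finset.mem_image.mp hz2
    by_cases hpq : p = q
    · subst hpq
      have := (c.mem_range p hp).2.1
      omega
    · exact (c.endpoints_distinct p hp q hq hpq).2.1 (hpz.trans hqz.symm)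
  have hinj1 : Set.InjOn Prod.fst (c.arcs : Set (ℕ × ℕ)) := by
    intro p hp q hq hpq
    by_contra hne
    exact (c.endpoints_distinct p hp q hq hne).1 hpq
  have hinj2 : Set.InjOn Prod.snd (c.arcs : Set (ℕ × ℕ)) := by
    intro p hp q hq hpq
    by_contra hne
    exact (c.endpoints_distinct p hp q hq hne).2.2.2 hpq
  have hcard : E.card = 2 * m := by
    rw [hE, Finset.card_union_of_disjoint hdisj,
      Finset.card_image_of_injOn hinj1, Finset.card_image_of_injOn hinj2, c.card_arcs]
    omega
  have hEeq : Finset.Icc 1 (2 * m) = E := by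
    apply (Finset.eq_of_subset_of_card_le hsub ?_).symm
    rw [hcard, Nat.card_Icc]
    omega
  have hxE : x ∈ E := by
    rw [← hEeq]
    exact Finset.mem_Icc.mpr ⟨hx1, hx2⟩
  rw [hE, Finset.mem_union] at hxE
  rcases hxE with h | h <;>
  · obtain ⟨p, hp, hpx⟩ := Finset.mem_image.mp h
    exact ⟨p, hp, by simp [← hpx]⟩

lemma NCMatching.pfn_range {x : ℕ} (hx1 : 1 ≤ x) (hx2 : x ≤ 2 * m) :
    1 ≤ pfn c.arcs x ∧ pfn c.arcs x ≤ 2 * m := by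
  obtain ⟨⟨u, v⟩, hp, h⟩ := c.cover hx1 hx2
  rcases c.mem_range _ hp with ⟨h1, h2, h3⟩
  rcases h with rfl | rfl
  · rw [c.pfn_fst hp]; omega
  · rw [c.pfn_snd hp]; omega

lemma NCMatching.pfn_invol {x : ℕ} (hx1 : 1 ≤ x) (hx2 : x ≤ 2 * m) :
    pfn c.arcs (pfn c.arcs x) = x := by
  obtain ⟨⟨u, v⟩, hp, h⟩ := c.cover hx1 hx2
  rcases h with rfl | rfl
  · rw [c.pfn_fst hp, c.pfn_snd hp]
  · rw [c.pfn_snd hp, c.pfn_fst hp]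

/-- no rays in a perfect matching -/
lemma NCMatching.not_isRay (i : ℕ) : ¬ c.IsRay i := by
  rintro ⟨h1, h2, h3⟩
  obtain ⟨p, hp, h⟩ := c.cover h1 h2
  rcases h3 p hp with ⟨hx, hy⟩
  rcases h with rfl | rfl
  · exact hx rfl
  · exact hy rfl

end Cover

/-- the gluing function: go along `c`'s arc, then along `a`'s arc (index version) -/
def gC {m : ℕ} (a c : NCMatching (2 * m) m) (x : Fin (2 * m)) : Fin (2 * m) :=
  ⟨pfn a.arcs (pfn c.arcs ((x : ℕ) + 1)) - 1, by
    have hx1 : 1 ≤ (x : ℕ) + 1 := by omega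
    have hx2 : (x : ℕ) + 1 ≤ 2 * m := x.isLt
    have h1 := c.pfn_range hx1 hx2
    have h2 := a.pfn_range h1.1 h1.2
    omega⟩

lemma gC_label {m : ℕ} (a c : NCMatching (2 * m) m) (x : Fin (2 * m)) :
    ((gC a c x : ℕ)) + 1 = pfn a.arcs (pfn c.arcs ((x : ℕ) + 1)) := by
  have hx1 : 1 ≤ (x : ℕ) + 1 := by omega
  have hx2 : (x : ℕ) + 1 ≤ 2 * m := x.isLt
  have h1 := c.pfn_range hx1 hx2
  have h2 := a.pfn_range h1.1 h1.2
  simp only [gC]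
  omega

lemma move_gC {m : ℕ} (a c c' : NCMatching (2 * m) m) (h : Move c c') :
    ∃ p q r s : Fin (2 * m),
      gC a c' = fun x => gC a c (Equiv.swap p q (Equiv.swap r s x)) := by
  rcases h with ⟨i, j, l, w, hij', hjl', hlw', hij, hlw, hc'⟩ |
    ⟨i, j, l, _, _, hray, _, _⟩
  swap
  · exact absurd hray (c.not_isRay i)
  obtain ⟨hi1, hij2, hj2⟩ := c.mem_range _ hij
  obtain ⟨hl1, hlw2, hw2⟩ := c.mem_range _ hlw
  obtain ⟨iF, viF⟩ : ∃ t : Fin (2*m), (t:ℕ) = i - 1 := ⟨⟨i-1, by omega⟩, rfl⟩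
  obtain ⟨jF, vjF⟩ : ∃ t : Fin (2*m), (t:ℕ) = j - 1 := ⟨⟨j-1, by omega⟩, rfl⟩
  obtain ⟨lF, vlF⟩ : ∃ t : Fin (2*m), (t:ℕ) = l - 1 := ⟨⟨l-1, by omega⟩, rfl⟩
  obtain ⟨wF, vwF⟩ : ∃ t : Fin (2*m), (t:ℕ) = w - 1 := ⟨⟨w-1, by omega⟩, rfl⟩
  refine ⟨iF, lF, jF, wF, ?_⟩
  have hiw : (i, w) ∈ c'.arcs := by rw [hc']; exact Finset.mem_insert_self _ _
  have hjl : (j, l) ∈ c'.arcs := by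
    rw [hc']; exact Finset.mem_insert_of_mem (Finset.mem_insert_self _ _)
  funext x
  have hx2 : (x:ℕ) + 1 ≤ 2*m := x.isLt
  by_cases hyi : (x:ℕ) + 1 = i
  · have hx : x = iF := Fin.ext (by omega)
    rw [hx, Equiv.swap_apply_of_ne_of_ne (a := jF) (b := wF)
      (Fin.ne_of_val_ne (by omega)) (Fin.ne_of_val_ne (by omega)), Equiv.swap_apply_left]
    apply Fin.ext
    have e1 := gC_label a c' iF
    have e2 := gC_label a c lF
    rw [show ((iF:ℕ)+1) = i by omega, c'.pfn_fst hiw] at e1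
    rw [show ((lF:ℕ)+1) = l by omega, c.pfn_fst hlw] at e2
    omega
  · by_cases hyj : (x:ℕ) + 1 = j
    · have hx : x = jF := Fin.ext (by omega)
      rw [hx, Equiv.swap_apply_left, Equiv.swap_apply_of_ne_of_ne (a := iF) (b := lF)
        (Fin.ne_of_val_ne (by omega)) (Fin.ne_of_val_ne (by omega))]
      apply Fin.ext
      have e1 := gC_label a c' jF
      have e2 := gC_label a c wF
      rw [show ((jF:ℕ)+1) = j by omega, c'.pfn_fst hjl] at e1
      rw [show ((wF:ℕ)+1) = w by omega, c.pfn_snd hlw] at e2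
      omega
    · by_cases hyl : (x:ℕ) + 1 = l
      · have hx : x = lF := Fin.ext (by omega)
        rw [hx, Equiv.swap_apply_of_ne_of_ne (a := jF) (b := wF)
          (Fin.ne_of_val_ne (by omega)) (Fin.ne_of_val_ne (by omega)),
          Equiv.swap_apply_right]
        apply Fin.ext
        have e1 := gC_label a c' lF
        have e2 := gC_label a c iF
        rw [show ((lF:ℕ)+1) = l by omega, c'.pfn_snd hjl] at e1
        rw [show ((iF:ℕ)+1) = i by omega, c.pfn_fst hij] at e2
        omega
      · by_cases hyw : (x:ℕ) + 1 = w
        · have hx : x = wF := Fin.ext (by omega)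
          rw [hx, Equiv.swap_apply_right, Equiv.swap_apply_of_ne_of_ne (a := iF) (b := lF)
            (Fin.ne_of_val_ne (by omega)) (Fin.ne_of_val_ne (by omega))]
          apply Fin.ext
          have e1 := gC_label a c' wF
          have e2 := gC_label a c jF
          rw [show ((wF:ℕ)+1) = w by omega, c'.pfn_snd hiw] at e1
          rw [show ((jF:ℕ)+1) = j by omega, c.pfn_snd hij] at e2
          omega
        · rw [Equiv.swap_apply_of_ne_of_ne (a := jF) (b := wF)
            (Fin.ne_of_val_ne (by omega)) (Fin.ne_of_val_ne (by omega)),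
            Equiv.swap_apply_of_ne_of_ne (a := iF) (b := lF)
            (Fin.ne_of_val_ne (by omega)) (Fin.ne_of_val_ne (by omega))]
          apply Fin.ext
          have e1 := gC_label a c' x
          have e2 := gC_label a c x
          obtain ⟨⟨u, v⟩, hp, hcase⟩ := c.cover (x := (x:ℕ)+1) (by omega) hx2
          have hne1 : (u, v) ≠ (i, j) := by
            rintro rfl0
            injection rfl0 with h1 h2
            rcases hcase with h | h <;> omega
          have hne2 : (u, v) ≠ (l, w) := by
            rintro rfl0
            injection rfl0 with h1 h2
            rcases hcase with h | h <;> omega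
          have hp' : (u, v) ∈ c'.arcs := by
            rw [hc']
            exact Finset.mem_insert_of_mem (Finset.mem_insert_of_mem
              (Finset.mem_erase.mpr ⟨hne2, Finset.mem_erase.mpr ⟨hne1, hp⟩⟩))
          rcases hcase with hc1 | hc1
          · rw [hc1, c'.pfn_fst hp'] at e1
            rw [hc1, c.pfn_fst hp] at e2
            omega
          · rw [hc1, c'.pfn_snd hp'] at e1
            rw [hc1, c.pfn_snd hp] at e2
            omega

lemma card_quot_orbit_id {α : Type*} [Finite α] :
    Nat.card (Quot fun x y : α => x = y) = Nat.card α := by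
  symm
  apply Nat.card_eq_of_bijective (Quot.mk _)
  constructor
  · intro x y h
    have h2 := Quot.eqvGen_exact h
    have : (fun x y : α => x = y) = Eq := rfl
    rw [this, eq_equivalence.eqvGen_eq] at h2
    exact h2
  · exact Quot.mk_surjective

lemma gC_self {m : ℕ} (a : NCMatching (2 * m) m) : gC a a = id := by
  funext x
  apply Fin.ext
  have e := gC_label a a x
  rw [a.pfn_invol (by omega) x.isLt] at e
  simp only [id_eq]
  omega

lemma phi_aa {m : ℕ} (a : NCMatching (2 * m) m) :
    Nat.card (Quot fun x y : Fin (2 * m) => gC a a x = y) = 2 * m := by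
  rw [gC_self]
  simp only [id_eq]
  rw [card_quot_orbit_id, Nat.card_eq_fintype_card, Fintype.card_fin]

section PhiB
variable {m : ℕ} (hm : 1 ≤ m) (a b : NCMatching (2 * m) m)
  (ha : a.arcs = (Finset.range m).image (fun i => (2 * i + 1, 2 * i + 2)))
  (hb : b.arcs = insert (1, 2 * m)
    ((Finset.range (m - 1)).image (fun i => (2 * i + 2, 2 * i + 3))))

include ha in
lemma arcA {t : ℕ} (ht : t < m) : (2 * t + 1, 2 * t + 2) ∈ a.arcs := by
  rw [ha]
  exact Finset.mem_image.mpr ⟨t, Finset.mem_range.mpr ht, rfl⟩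

include hb in
lemma arcB1 : (1, 2 * m) ∈ b.arcs := by
  rw [hb]; exact Finset.mem_insert_self _ _

include hb in
lemma arcB {t : ℕ} (ht : t < m - 1) : (2 * t + 2, 2 * t + 3) ∈ b.arcs := by
  rw [hb]
  exact Finset.mem_insert_of_mem (Finset.mem_image.mpr ⟨t, Finset.mem_range.mpr ht, rfl⟩)

include hm ha hb in
lemma gab (v : ℕ) (hv : v < 2 * m) :
    ((gC a b ⟨v, hv⟩ : Fin (2 * m)) : ℕ) =
      if v = 0 then 2 * m - 2
      else if v % 2 = 0 then v - 2
      else if v = 2 * m - 1 then 1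
      else v + 2 := by
  have e := gC_label a b ⟨v, hv⟩
  simp only [Fin.val_mk] at e
  by_cases h0 : v = 0
  · subst h0
    have hpb : pfn b.arcs (0 + 1) = 2 * m := by
      have := b.pfn_fst (arcB1 b hb); simpa using this
    have hpa : pfn a.arcs (2 * m) = 2 * m - 1 := by
      have := a.pfn_snd (arcA a ha (t := m - 1) (by omega))
      rw [show 2 * (m - 1) + 2 = 2 * m by omega] at this
      omega
    rw [hpb, hpa] at e
    rw [if_pos rfl]
    omega
  · rw [if_neg h0]
    by_cases h2 : v % 2 = 0
    · obtain ⟨t, rfl⟩ : ∃ t, v = 2 * t := ⟨v / 2, by omega⟩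
      have ht1 : 1 ≤ t := by omega
      have hpb : pfn b.arcs (2 * t + 1) = 2 * t := by
        have := b.pfn_snd (arcB b hb (t := t - 1) (by omega))
        rw [show 2 * (t - 1) + 3 = 2 * t + 1 by omega] at this
        omega
      have hpa : pfn a.arcs (2 * t) = 2 * t - 1 := by
        have := a.pfn_snd (arcA a ha (t := t - 1) (by omega))
        rw [show 2 * (t - 1) + 2 = 2 * t by omega] at this
        omega
      rw [hpb, hpa] at e
      rw [if_pos h2]
      omega
    · rw [if_neg h2]
      by_cases h3 : v = 2 * m - 1
      · subst h3
        have hpb : pfn b.arcs (2 * m - 1 + 1) = 1 := by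
          have := b.pfn_snd (arcB1 b hb)
          rw [show 2 * m - 1 + 1 = 2 * m by omega]
          exact this
        have hpa : pfn a.arcs 1 = 2 := by
          have := a.pfn_fst (arcA a ha (t := 0) hm); simpa using this
        rw [hpb, hpa] at e
        rw [if_pos rfl]
        omega
      · rw [if_neg h3]
        obtain ⟨t, rfl⟩ : ∃ t, v = 2 * t + 1 := ⟨v / 2, by omega⟩
        have hpb : pfn b.arcs (2 * t + 1 + 1) = 2 * t + 3 := by
          have := b.pfn_fst (arcB b hb (t := t) (by omega))
          rw [show 2 * t + 1 + 1 = 2 * t + 2 by omega]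
          exact this
        have hpa : pfn a.arcs (2 * t + 3) = 2 * t + 4 := by
          have := a.pfn_fst (arcA a ha (t := t + 1) (by omega))
          rw [show 2 * (t + 1) + 1 = 2 * t + 3 by omega,
            show 2 * (t + 1) + 2 = 2 * t + 4 by omega] at this
          exact this
        rw [hpb, hpa] at e
        omega

include hm ha hb in
lemma gab_parity (x : Fin (2 * m)) : ((gC a b x : Fin (2 * m)) : ℕ) % 2 = (x : ℕ) % 2 := by
  have e := gab hm a b ha hb (x : ℕ) x.isLt
  have hx : (⟨(x : ℕ), x.isLt⟩ : Fin (2 * m)) = x := Fin.ext rfl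
  rw [hx] at e
  split_ifs at e <;> omega

include hm ha hb in
lemma phi_ab : Nat.card (Quot fun x y : Fin (2 * m) => gC a b x = y) = 2 := by
  set R := fun x y : Fin (2 * m) => gC a b x = y with hR
  have claim_even : ∀ t : ℕ, ∀ h : 2 * t < 2 * m,
      Quot.mk R ⟨2 * t, h⟩ = Quot.mk R ⟨0, by omega⟩ := by
    intro t
    induction t with
    | zero => intro h; rfl
    | succ t ih =>
      intro h
      have hedge : gC a b ⟨2 * (t + 1), h⟩ = ⟨2 * t, by omega⟩ := by
        apply Fin.ext
        rw [gab hm a b ha hb]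
        rw [if_neg (by omega), if_pos (by omega)]
        simp only [Fin.val_mk]
        omega
      have : Quot.mk R ⟨2 * (t + 1), h⟩ = Quot.mk R ⟨2 * t, by omega⟩ :=
        Quot.sound hedge
      rw [this, ih]
  have claim_odd : ∀ t : ℕ, ∀ h : 2 * t + 1 < 2 * m,
      Quot.mk R ⟨2 * t + 1, h⟩ = Quot.mk R ⟨1, by omega⟩ := by
    intro t
    induction t with
    | zero => intro h; rfl
    | succ t ih =>
      intro h
      have h' : 2 * t + 1 < 2 * m := by omega
      have hedge : gC a b ⟨2 * t + 1, h'⟩ = ⟨2 * (t + 1) + 1, h⟩ := by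
        apply Fin.ext
        rw [gab hm a b ha hb]
        rw [if_neg (by omega), if_neg (by omega), if_neg (by omega)]
        simp only [Fin.val_mk]
        omega
      have e1 : Quot.mk R ⟨2 * t + 1, h'⟩ = Quot.mk R ⟨2 * (t + 1) + 1, h⟩ :=
        Quot.sound hedge
      rw [← e1, ih]
  have hF : ∀ x y : Fin (2 * m), R x y → ((x:ℕ) % 2 = 1) = ((y:ℕ) % 2 = 1) := by
    intro x y hxy
    have := gab_parity hm a b ha hb x
    rw [hxy] at this
    simp only [eq_iff_iff]
    omega
  let F : Quot R → Bool := Quot.lift (fun x : Fin (2 * m) => decide ((x:ℕ) % 2 = 1))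
    (by intro x y hxy; simp only [decide_eq_decide]; rw [hF x y hxy])
  have hbij : Function.Bijective F := by
    constructor
    · intro c1 c2 hc
      obtain ⟨x1, rfl⟩ := Quot.mk_surjective c1
      obtain ⟨x2, rfl⟩ := Quot.mk_surjective c2
      have hpar : (x1:ℕ) % 2 = (x2:ℕ) % 2 := by
        have : decide ((x1:ℕ) % 2 = 1) = decide ((x2:ℕ) % 2 = 1) := hc
        rcases Nat.mod_two_eq_zero_or_one (x1:ℕ) with h | h <;>
          rcases Nat.mod_two_eq_zero_or_one (x2:ℕ) with h' | h' <;>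
          simp [h, h'] at this ⊢
      rcases Nat.mod_two_eq_zero_or_one (x1:ℕ) with h | h
      · have hb1 : 2 * ((x1:ℕ)/2) < 2 * m := by omega
        have hb2 : 2 * ((x2:ℕ)/2) < 2 * m := by omega
        have e1 : x1 = ⟨2 * ((x1:ℕ)/2), hb1⟩ := Fin.ext (by simp; omega)
        have e2 : x2 = ⟨2 * ((x2:ℕ)/2), hb2⟩ := Fin.ext (by simp; omega)
        exact ((congrArg (Quot.mk R) e1).trans (claim_even _ hb1)).trans
          ((congrArg (Quot.mk R) e2).trans (claim_even _ hb2)).symm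
      · have hb1 : 2 * ((x1:ℕ)/2) + 1 < 2 * m := by omega
        have hb2 : 2 * ((x2:ℕ)/2) + 1 < 2 * m := by omega
        have e1 : x1 = ⟨2 * ((x1:ℕ)/2) + 1, hb1⟩ := Fin.ext (by simp; omega)
        have e2 : x2 = ⟨2 * ((x2:ℕ)/2) + 1, hb2⟩ := Fin.ext (by simp; omega)
        exact ((congrArg (Quot.mk R) e1).trans (claim_odd _ hb1)).trans
          ((congrArg (Quot.mk R) e2).trans (claim_odd _ hb2)).symm
    · intro bo
      cases bo
      · exact ⟨Quot.mk R ⟨0, by omega⟩, by simp [F]⟩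
      · exact ⟨Quot.mk R ⟨1, by omega⟩, by simp [F]⟩
  rw [Nat.card_eq_of_bijective F hbij]
  simp

end PhiB

lemma NCMatching.arcs_ext {n k : ℕ} {c d : NCMatching n k} (h : c.arcs = d.arcs) : c = d := by
  cases c; cases d
  simp only at h
  subst h
  rfl

def arcsAt (m t : ℕ) : Finset (ℕ × ℕ) :=
  insert (1, 2*t+2) (((Finset.range t).image fun i => (2*i+2, 2*i+3)) ∪
    ((Finset.Ico (t+1) m).image fun s => (2*s+1, 2*s+2)))

lemma mem_arcsAt {m t u v : ℕ} : (u, v) ∈ arcsAt m t ↔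
    (u = 1 ∧ v = 2*t+2) ∨ (∃ i, i < t ∧ u = 2*i+2 ∧ v = 2*i+3) ∨
    (∃ s, t+1 ≤ s ∧ s < m ∧ u = 2*s+1 ∧ v = 2*s+2) := by
  simp only [arcsAt, Finset.mem_insert, Finset.mem_union, Finset.mem_image,
    Finset.mem_range, Finset.mem_Ico, Prod.mk.injEq, Prod.ext_iff]
  constructor
  · rintro (⟨h1, h2⟩ | ⟨i, hi, h1, h2⟩ | ⟨s, ⟨hs1, hs2⟩, h1, h2⟩)
    · exact Or.inl ⟨h1, h2⟩
    · exact Or.inr (Or.inl ⟨i, hi, h1.symm, h2.symm⟩)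
    · exact Or.inr (Or.inr ⟨s, hs1, hs2, h1.symm, h2.symm⟩)
  · rintro (⟨h1, h2⟩ | ⟨i, hi, h1, h2⟩ | ⟨s, hs1, hs2, h1, h2⟩)
    · exact Or.inl ⟨h1, h2⟩
    · exact Or.inr (Or.inl ⟨i, hi, h1.symm, h2.symm⟩)
    · exact Or.inr (Or.inr ⟨s, ⟨hs1, hs2⟩, h1.symm, h2.symm⟩)

def matchAt (m t : ℕ) (hm : 1 ≤ m) (ht : t ≤ m - 1) : NCMatching (2*m) m where
  arcs := arcsAt m t
  card_arcs := by
    have hinj1 : Set.InjOn (fun i => (2*i+2, 2*i+3)) (Finset.range t : Set ℕ) := by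
      intro i _ j _ h
      simp only [Prod.mk.injEq] at h
      omega
    have hinj2 : Set.InjOn (fun s => (2*s+1, 2*s+2)) (Finset.Ico (t+1) m : Set ℕ) := by
      intro i _ j _ h
      simp only [Prod.mk.injEq] at h
      omega
    have hdisj : Disjoint ((Finset.range t).image fun i => (2*i+2, 2*i+3))
        ((Finset.Ico (t+1) m).image fun s => (2*s+1, 2*s+2)) := by
      rw [Finset.disjoint_left]
      rintro ⟨u, v⟩ h1 h2
      obtain ⟨i, _, hi⟩ := Finset.mem_image.mp h1
      obtain ⟨s, _, hs⟩ := Finset.mem_image.mp h2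
      rw [← hs] at hi
      simp only [Prod.mk.injEq] at hi
      omega
    have hnotmem : (1, 2*t+2) ∉ ((Finset.range t).image fun i => (2*i+2, 2*i+3)) ∪
        ((Finset.Ico (t+1) m).image fun s => (2*s+1, 2*s+2)) := by
      rw [Finset.mem_union]
      rintro (h | h)
      · obtain ⟨i, _, hi⟩ := Finset.mem_image.mp h
        simp only [Prod.mk.injEq] at hi
        omega
      · obtain ⟨s, hs', hi⟩ := Finset.mem_image.mp h
        rw [Finset.mem_Ico] at hs'
        simp only [Prod.mk.injEq] at hi
        omega
    rw [arcsAt, Finset.card_insert_of_notMem hnotmem,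
      Finset.card_union_of_disjoint hdisj,
      Finset.card_image_of_injOn hinj1, Finset.card_image_of_injOn hinj2,
      Finset.card_range, Nat.card_Ico]
    omega
  mem_range := by
    rintro ⟨u, v⟩ hp
    rw [mem_arcsAt] at hp
    dsimp only
    rcases hp with ⟨rfl, rfl⟩ | ⟨i, hi, rfl, rfl⟩ | ⟨s, hs1, hs2, rfl, rfl⟩ <;> omega
  endpoints_distinct := by
    rintro ⟨p1, p2⟩ hp ⟨q1, q2⟩ hq hne
    have hne' : ¬(p1 = q1 ∧ p2 = q2) := by
      rintro ⟨rfl, rfl⟩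
      exact hne rfl
    rw [mem_arcsAt] at hp hq
    dsimp only
    rcases hp with ⟨rfl, rfl⟩ | ⟨i, hi, rfl, rfl⟩ | ⟨s, hs1, hs2, rfl, rfl⟩ <;>
      rcases hq with ⟨rfl, rfl⟩ | ⟨i', hi', rfl, rfl⟩ | ⟨s', hs1', hs2', rfl, rfl⟩ <;>
      omega
  noncross := by
    rintro ⟨p1, p2⟩ hp ⟨q1, q2⟩ hq
    rw [mem_arcsAt] at hp hq
    dsimp only
    rcases hp with ⟨rfl, rfl⟩ | ⟨i, hi, rfl, rfl⟩ | ⟨s, hs1, hs2, rfl, rfl⟩ <;>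
      rcases hq with ⟨rfl, rfl⟩ | ⟨i', hi', rfl, rfl⟩ | ⟨s', hs1', hs2', rfl, rfl⟩ <;>
      omega
  no_ray_under := by
    rintro ⟨p1, p2⟩ hp r h1 h2
    rw [mem_arcsAt] at hp
    dsimp only at h1 h2
    rcases hp with ⟨rfl, rfl⟩ | ⟨i, hi, rfl, rfl⟩ | ⟨s, hs1, hs2, rfl, rfl⟩
    · rcases Nat.even_or_odd r with ⟨x, hx⟩ | ⟨x, hx⟩
      · refine ⟨(2*(x-1)+2, 2*(x-1)+3), ?_, Or.inl (by omega)⟩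
        rw [mem_arcsAt]
        exact Or.inr (Or.inl ⟨x - 1, by omega, rfl, rfl⟩)
      · refine ⟨(2*(x-1)+2, 2*(x-1)+3), ?_, Or.inr (by omega)⟩
        rw [mem_arcsAt]
        exact Or.inr (Or.inl ⟨x - 1, by omega, rfl, rfl⟩)
    · exfalso; omega
    · exfalso; omega

lemma arcsAt_zero {m : ℕ} (hm : 1 ≤ m) :
    arcsAt m 0 = (Finset.range m).image fun i => (2*i+1, 2*i+2) := by
  ext ⟨u, v⟩
  rw [mem_arcsAt]
  simp only [Finset.mem_image, Finset.mem_range, Prod.mk.injEq]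
  constructor
  · rintro (⟨rfl, rfl⟩ | ⟨i, hi, rfl, rfl⟩ | ⟨s, hs1, hs2, rfl, rfl⟩)
    · exact ⟨0, hm, by omega, by omega⟩
    · omega
    · exact ⟨s, hs2, rfl, rfl⟩
  · rintro ⟨i, hi, rfl, rfl⟩
    rcases Nat.eq_zero_or_pos i with rfl | hpos
    · exact Or.inl ⟨rfl, by omega⟩
    · exact Or.inr (Or.inr ⟨i, by omega, hi, rfl, rfl⟩)

lemma arcsAt_last {m : ℕ} (hm : 1 ≤ m) :
    arcsAt m (m-1) = insert (1, 2*m)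
      ((Finset.range (m-1)).image fun i => (2*i+2, 2*i+3)) := by
  ext ⟨u, v⟩
  rw [mem_arcsAt]
  simp only [Finset.mem_insert, Finset.mem_image, Finset.mem_range, Prod.mk.injEq,
    Prod.ext_iff]
  constructor
  · rintro (⟨rfl, rfl⟩ | ⟨i, hi, rfl, rfl⟩ | ⟨s, hs1, hs2, rfl, rfl⟩)
    · exact Or.inl ⟨rfl, by omega⟩
    · exact Or.inr ⟨i, hi, rfl, rfl⟩
    · omega
  · rintro (⟨rfl, rfl⟩ | ⟨i, hi, rfl, rfl⟩)
    · exact Or.inl ⟨rfl, by omega⟩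
    · exact Or.inr (Or.inl ⟨i, hi, rfl, rfl⟩)

lemma arcsAt_step {m t : ℕ} (ht : t < m - 1) :
    arcsAt m (t+1) = insert (1, 2*t+4) (insert (2*t+2, 2*t+3)
      (((arcsAt m t).erase (1, 2*t+2)).erase (2*t+3, 2*t+4))) := by
  ext ⟨u, v⟩
  simp only [Finset.mem_insert, Finset.mem_erase, mem_arcsAt, Prod.mk.injEq, ne_eq,
    not_and]
  constructor
  · rintro (⟨rfl, rfl⟩ | ⟨i, hi, rfl, rfl⟩ | ⟨s, hs1, hs2, rfl, rfl⟩)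
    · exact Or.inl ⟨rfl, by omega⟩
    · rcases Nat.lt_or_ge i t with hit | hit
      · refine Or.inr (Or.inr ⟨by omega, by omega, Or.inr (Or.inl ⟨i, hit, rfl, rfl⟩)⟩)
      · have : i = t := by omega
        subst this
        exact Or.inr (Or.inl ⟨rfl, rfl⟩)
    · refine Or.inr (Or.inr ⟨by omega, by omega, Or.inr (Or.inr ⟨s, by omega, hs2, rfl, rfl⟩)⟩)
  · rintro (⟨rfl, rfl⟩ | ⟨rfl, rfl⟩ | ⟨hne1, hne2, (⟨rfl, rfl⟩ | ⟨i, hi, rfl, rfl⟩ | ⟨s, hs1, hs2, rfl, rfl⟩)⟩)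
    · exact Or.inl ⟨rfl, by omega⟩
    · exact Or.inr (Or.inl ⟨t, by omega, rfl, rfl⟩)
    · exact absurd rfl (hne2 rfl)
    · exact Or.inr (Or.inl ⟨i, by omega, rfl, rfl⟩)
    · rcases Nat.lt_or_ge (t+1) s with hst | hst
      · exact Or.inr (Or.inr ⟨s, by omega, hs2, rfl, rfl⟩)
      · have : s = t + 1 := by omega
        subst this
        exact absurd (by omega : 2*(t+1)+2 = 2*t+4) (hne1 (by omega))

noncomputable def PhiN {m : ℕ} (a c : NCMatching (2*m) m) : ℕ :=
  Nat.card (Quot fun x y : Fin (2*m) => gC a c x = y)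

lemma PhiN_step {m : ℕ} (a c c' : NCMatching (2*m) m) (h : Move c c') :
    PhiN a c ≤ PhiN a c' + 2 ∧ PhiN a c' ≤ PhiN a c + 2 := by
  obtain ⟨p, q, r, s, hEq⟩ := move_gC a c c' h
  have h2 : PhiN a c' = Nat.card
      (Quot fun x y : Fin (2*m) => gC a c (Equiv.swap p q (Equiv.swap r s x)) = y) := by
    unfold PhiN
    simp only [hEq]
  have h3 := card_quot_orbit_two_swaps (gC a c) p q r s
  constructor
  · rw [h2]; exact h3.1
  · rw [h2]; exact h3.2

/-- Let `a` be the perfect matching with arcs `(1,2),(3,4),…,(2m-1,2m)` and `b` the one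
with arcs `(2,3),(4,5),…,(2m-2,2m-1),(1,2m)`.  There is a sequence of `m - 1` forward
moves `→` taking `a` to `b`, and no shorter move sequence exists. -/
theorem unnested_to_rainbow (m : ℕ) (hm : 1 ≤ m) (a b : NCMatching (2 * m) m)
    (ha : a.arcs = (Finset.range m).image (fun i => (2 * i + 1, 2 * i + 2)))
    (hb : b.arcs = insert (1, 2 * m)
      ((Finset.range (m - 1)).image (fun i => (2 * i + 2, 2 * i + 3)))) :
    (∃ f : Fin ((m - 1) + 1) → NCMatching (2 * m) m,
      f 0 = a ∧ f (Fin.last (m - 1)) = b ∧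
      ∀ i : Fin (m - 1), Move (f i.castSucc) (f i.succ)) ∧
    (∀ d : ℕ, ∀ g : Fin (d + 1) → NCMatching (2 * m) m,
      g 0 = a → g (Fin.last d) = b → IsMoveSeq g → m - 1 ≤ d) := by
  constructor
  · -- the explicit sequence
    refine ⟨fun t => matchAt m t.val hm (by omega), ?_, ?_, ?_⟩
    · apply NCMatching.arcs_ext
      show arcsAt m (0 : Fin (m - 1 + 1)).val = a.arcs
      rw [show ((0 : Fin (m - 1 + 1)).val) = 0 from rfl, ha, arcsAt_zero hm]
    · apply NCMatching.arcs_ext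
      show arcsAt m (Fin.last (m - 1)).val = b.arcs
      rw [show ((Fin.last (m - 1)).val) = m - 1 from rfl, hb, arcsAt_last hm]
    · intro i
      have hi : (i : ℕ) < m - 1 := i.isLt
      left
      refine ⟨1, 2 * (i : ℕ) + 2, 2 * (i : ℕ) + 3, 2 * (i : ℕ) + 4,
        by omega, by omega, by omega, ?_, ?_, ?_⟩
      · show (1, 2 * (i : ℕ) + 2) ∈ arcsAt m i.castSucc.val
        rw [show (i.castSucc.val) = (i : ℕ) from rfl, mem_arcsAt]
        exact Or.inl ⟨rfl, rfl⟩
      · show (2 * (i : ℕ) + 3, 2 * (i : ℕ) + 4) ∈ arcsAt m i.castSucc.val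
        rw [show (i.castSucc.val) = (i : ℕ) from rfl, mem_arcsAt]
        exact Or.inr (Or.inr ⟨(i : ℕ) + 1, by omega, by omega, by omega, by omega⟩)
      · show arcsAt m i.succ.val = insert (1, 2 * (i : ℕ) + 4)
          (insert (2 * (i : ℕ) + 2, 2 * (i : ℕ) + 3)
            (((arcsAt m i.castSucc.val).erase (1, 2 * (i : ℕ) + 2)).erase
              (2 * (i : ℕ) + 3, 2 * (i : ℕ) + 4)))
        rw [show (i.succ.val) = (i : ℕ) + 1 from rfl,
          show (i.castSucc.val) = (i : ℕ) from rfl]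
        exact arcsAt_step hi
  · -- the lower bound
    intro d g hg0 hgd hseq
    have step : ∀ i : Fin d,
        PhiN a (g i.castSucc) ≤ PhiN a (g i.succ) + 2 ∧
        PhiN a (g i.succ) ≤ PhiN a (g i.castSucc) + 2 := by
      intro i
      rcases hseq i with hmv | hmv
      · exact PhiN_step a _ _ hmv
      · exact (PhiN_step a _ _ hmv).symm
    have chain : ∀ t : ℕ, ∀ h : t < d + 1, 2 * m ≤ PhiN a (g ⟨t, h⟩) + 2 * t := by
      intro t
      induction t with
      | zero =>
        intro h
        have e : (⟨0, h⟩ : Fin (d + 1)) = 0 := rfl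
        rw [e, hg0]
        have : PhiN a a = 2 * m := phi_aa a
        omega
      | succ t ih =>
        intro h
        have h' : t < d + 1 := by omega
        have hd : t < d := by omega
        have hstep := step ⟨t, hd⟩
        have e1 : (⟨t, hd⟩ : Fin d).castSucc = ⟨t, h'⟩ := rfl
        have e2 : (⟨t, hd⟩ : Fin d).succ = ⟨t + 1, h⟩ := rfl
        rw [e1, e2] at hstep
        have := ih h'
        omega
    have hfin := chain d (by omega)
    have e : (⟨d, by omega⟩ : Fin (d + 1)) = Fin.last d := rfl
    rw [e, hgd] at hfin
    have hphib : PhiN a b = 2 := phi_ab hm a b ha hb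
    omega
end

section
/- Let a, b be perfect noncrossing matchings on n points (n even) and suppose (i,l) and (j,k) with i<j<k<l are nested arcs of a lying on the same circle of aw(b), with no other arc of that circle between them. Then the number of arcs of a whose left endpoint lies strictly between i and j and whose right endpoint lies strictly between k and l is even. -/
/- ==================== Auxiliary material ==================== -/

lemma glueRel_symm {n k : ℕ} {a b : NCMatching n k} {x y : ℕ} (h : glueRel a b x y) :
    glueRel a b y x := by
  unfold glueRel at *
  tauto

/-- A finset admitting a fixed-point-free involution has even cardinality. -/
lemma even_card_of_involution {α : Type*} [DecidableEq α] (f : α → α) :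
    ∀ s : Finset α, (∀ x ∈ s, f x ∈ s ∧ f x ≠ x ∧ f (f x) = x) → Even s.card := by
  intro s
  induction s using Finset.strongInduction with
  | _ s ih =>
    intro h
    rcases s.eq_empty_or_nonempty with rfl | ⟨x, hx⟩
    · simp
    · obtain ⟨hfx, hne, hff⟩ := h x hx
      have hfx' : f x ∈ s.erase x := Finset.mem_erase.mpr ⟨hne, hfx⟩
      have hsub : ((s.erase x).erase (f x)) ⊆ s :=
        (Finset.erase_subset _ _).trans (Finset.erase_subset _ _)
      have hss : ((s.erase x).erase (f x)) ⊂ s :=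
        (Finset.ssubset_iff_of_subset hsub).mpr ⟨x, hx, by simp⟩
      have hmem : ∀ y ∈ (s.erase x).erase (f x),
          f y ∈ (s.erase x).erase (f x) ∧ f y ≠ y ∧ f (f y) = y := by
        intro y hy
        rw [Finset.mem_erase, Finset.mem_erase] at hy
        obtain ⟨hy1, hy2, hy3⟩ := hy
        obtain ⟨m1, m2, m3⟩ := h y hy3
        refine ⟨?_, m2, m3⟩
        rw [Finset.mem_erase, Finset.mem_erase]
        refine ⟨?_, ?_, m1⟩
        · intro he
          apply hy2
          rw [← m3, he, hff]
        · intro he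
          apply hy1
          rw [← m3, he]
      obtain ⟨t, ht⟩ := ih _ hss hmem
      have c1 : (s.erase x).card = s.card - 1 := Finset.card_erase_of_mem hx
      have c2 : ((s.erase x).erase (f x)).card = (s.erase x).card - 1 :=
        Finset.card_erase_of_mem hfx'
      have c3 : 1 < s.card := Finset.one_lt_card.mpr ⟨x, hx, f x, hfx, hne.symm⟩
      exact ⟨t + 1, by omega⟩

namespace NCMatching

lemma eq_of_shared {n K : ℕ} (c : NCMatching n K) {p q : ℕ × ℕ} {v : ℕ} (hp : p ∈ c.arcs)
    (hq : q ∈ c.arcs) (h1 : v = p.1 ∨ v = p.2) (h2 : v = q.1 ∨ v = q.2) : p = q := by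
  by_contra hne
  obtain ⟨d1, d2, d3, d4⟩ := c.endpoints_distinct p hp q hq hne
  rcases h1 with rfl | rfl <;> rcases h2 with h | h <;> simp_all

open Classical in
/-- The other endpoint of the (unique) arc through `v` (or `v` itself if there is none). -/
noncomputable def partner {n K : ℕ} (c : NCMatching n K) (v : ℕ) : ℕ :=
  if h : ∃ r ∈ c.arcs, v = r.1 ∨ v = r.2 then
    if v = h.choose.1 then h.choose.2 else h.choose.1
  else v

lemma partner_fst {n K : ℕ} (c : NCMatching n K) {r : ℕ × ℕ} (hr : r ∈ c.arcs) :
    c.partner r.1 = r.2 := by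
  have hex : ∃ s ∈ c.arcs, r.1 = s.1 ∨ r.1 = s.2 := ⟨r, hr, Or.inl rfl⟩
  unfold partner
  rw [dif_pos hex]
  obtain ⟨hs, hv⟩ := hex.choose_spec
  have he : hex.choose = r := c.eq_of_shared hs hr hv (Or.inl rfl)
  rw [he, if_pos rfl]

lemma partner_snd {n K : ℕ} (c : NCMatching n K) {r : ℕ × ℕ} (hr : r ∈ c.arcs) :
    c.partner r.2 = r.1 := by
  have hex : ∃ s ∈ c.arcs, r.2 = s.1 ∨ r.2 = s.2 := ⟨r, hr, Or.inr rfl⟩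
  unfold partner
  rw [dif_pos hex]
  obtain ⟨hs, hv⟩ := hex.choose_spec
  have he : hex.choose = r := c.eq_of_shared hs hr hv (Or.inr rfl)
  have hlt : r.1 < r.2 := (c.mem_range r hr).2.1
  rw [he, if_neg (by omega)]

/-- Every vertex strictly under an arc is an endpoint of an arc lying strictly under it. -/
lemma cover_s15 {n K : ℕ} (c : NCMatching n K) {p q v : ℕ} (hpq : (p, q) ∈ c.arcs)
    (h1 : p < v) (h2 : v < q) :
    ∃ r ∈ c.arcs, (v = r.1 ∨ v = r.2) ∧ p < r.1 ∧ r.2 < q := by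
  obtain ⟨r, hr, hv⟩ := c.no_ray_under (p, q) hpq v h1 h2
  have hr12 : r.1 < r.2 := (c.mem_range r hr).2.1
  have hne : (p, q) ≠ r := by
    rintro rfl
    rcases hv with h | h
    · have hvp : v = p := h
      omega
    · have hvq : v = q := h
      omega
  obtain ⟨d1, d2, d3, d4⟩ := c.endpoints_distinct (p, q) hpq r hr hne
  have d1' : p ≠ r.1 := d1
  have d4' : q ≠ r.2 := d4
  have hnc1 : ¬(p < r.1 ∧ r.1 < q ∧ q < r.2) := c.noncross (p, q) hpq r hr
  have hnc2 : ¬(r.1 < p ∧ p < r.2 ∧ r.2 < q) := c.noncross r hr (p, q) hpq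
  rcases hv with rfl | rfl
  · refine ⟨r, hr, Or.inl rfl, h1, ?_⟩
    by_contra hcon
    push_neg at hcon
    exact hnc1 ⟨h1, h2, by omega⟩
  · refine ⟨r, hr, Or.inr rfl, ?_, h2⟩
    by_contra hcon
    push_neg at hcon
    exact hnc2 ⟨by omega, h1, h2⟩

/-- If a predicate is constant on arcs of `c`, then the set of vertices strictly under an
arc of `c` satisfying it has even cardinality. -/
lemma even_filter_Ioo {n K : ℕ} (c : NCMatching n K) {p q : ℕ}
    (hpq : (p, q) ∈ c.arcs) (P : ℕ → Prop) [DecidablePred P]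
    (hstab : ∀ r ∈ c.arcs, (P r.1 ↔ P r.2)) :
    Even (((Finset.Ioo p q).filter P).card) := by
  apply even_card_of_involution c.partner
  intro v hv
  rw [Finset.mem_filter, Finset.mem_Ioo] at hv
  obtain ⟨⟨h1, h2⟩, hPv⟩ := hv
  obtain ⟨r, hr, hvr, hl1, hl2⟩ := c.cover_s15 hpq h1 h2
  have hr12 : r.1 < r.2 := (c.mem_range r hr).2.1
  rcases hvr with rfl | rfl
  · rw [c.partner_fst hr]
    exact ⟨Finset.mem_filter.mpr ⟨Finset.mem_Ioo.mpr ⟨by omega, hl2⟩, (hstab r hr).mp hPv⟩,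
      by omega, c.partner_snd hr⟩
  · rw [c.partner_snd hr]
    exact ⟨Finset.mem_filter.mpr ⟨Finset.mem_Ioo.mpr ⟨hl1, by omega⟩, (hstab r hr).mpr hPv⟩,
      by omega, c.partner_fst hr⟩

end NCMatching

lemma range_filter_split (P : ℕ → Prop) [DecidablePred P] {p q : ℕ} (h : p ≤ q) :
    ((Finset.range q).filter P).card
      = ((Finset.range p).filter P).card + ((Finset.Ico p q).filter P).card := by
  rw [Finset.range_eq_Ico,
    ← Finset.Ico_union_Ico_eq_Ico (Nat.zero_le p) h, Finset.filter_union,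
    Finset.card_union_of_disjoint
      (Finset.disjoint_filter_filter (Finset.Ico_disjoint_Ico_consecutive 0 p q)),
    Finset.range_eq_Ico]

/-- Suppose `(i,l)` and `(j,k)` (`i<j<k<l`) are nested arcs of the perfect matching `a`
lying on the same circle of `a w(b)`, with no other arc of that circle between them.
Then the number of arcs of `a` lying between `(i,l)` and `(j,k)` is even. -/
theorem arcs_between_nested_even (m : ℕ) (a b : NCMatching (2 * m) m)
    (i j k l : ℕ) (hij : i < j) (hjk : j < k) (hkl : k < l)
    (houter : (i, l) ∈ a.arcs) (hinner : (j, k) ∈ a.arcs)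
    (hsame : Conn a b i j)
    (hnone : ∀ q ∈ a.arcs, i < q.1 → q.1 < j → k < q.2 → q.2 < l → ¬ Conn a b i q.1) :
    Even ((a.arcs.filter (fun q => i < q.1 ∧ q.1 < j ∧ k < q.2 ∧ q.2 < l)).card) := by
  classical
  have hconn_i : Conn a b i i := Relation.ReflTransGen.refl
  -- classification of arcs with left endpoint strictly between `i` and `j`
  have hclass : ∀ r ∈ a.arcs, i < r.1 → r.1 < j → r.2 < l →
      (i < r.2 ∧ r.2 < j) ∨ (k < r.2 ∧ r.2 < l) := by
    intro r hra h1 h2 h3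
    have hr12 : r.1 < r.2 := (a.mem_range r hra).2.1
    have hne : r ≠ (j, k) := by
      intro he
      rw [he] at h2
      exact absurd h2 (lt_irrefl j)
    obtain ⟨d1, d2, d3, d4⟩ := a.endpoints_distinct r hra (j, k) hinner hne
    have d3' : r.2 ≠ j := d3
    have d4' : r.2 ≠ k := d4
    have hnc : ¬(r.1 < j ∧ j < r.2 ∧ r.2 < k) := a.noncross r hra (j, k) hinner
    rcases lt_or_ge r.2 j with h | h
    · exact Or.inl ⟨by omega, h⟩
    · refine Or.inr ⟨?_, h3⟩
      rcases lt_or_ge k r.2 with h' | h'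
      · exact h'
      · exact absurd ⟨h2, by omega, by omega⟩ hnc
  -- the parity-counting function along the glued one-manifold
  have key : ∀ c : NCMatching (2 * m) m, (∀ r ∈ c.arcs, glueRel a b r.1 r.2) →
      ∀ p q : ℕ, (p, q) ∈ c.arcs → Conn a b i p →
      ((Finset.range q).filter (fun v => ¬ Conn a b i v)).card % 2
        = ((Finset.range p).filter (fun v => ¬ Conn a b i v)).card % 2 := by
    intro c hc p q hpq hp
    have hpq' : p < q := (c.mem_range _ hpq).2.1
    have hsplit := range_filter_split (fun v => ¬ Conn a b i v) (le_of_lt hpq')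
    have hIco : (Finset.Ico p q).filter (fun v => ¬ Conn a b i v)
        = (Finset.Ioo p q).filter (fun v => ¬ Conn a b i v) := by
      ext y
      simp only [Finset.mem_filter, Finset.mem_Ico, Finset.mem_Ioo]
      constructor
      · rintro ⟨⟨hy1, hy2⟩, hy3⟩
        refine ⟨⟨lt_of_le_of_ne hy1 ?_, hy2⟩, hy3⟩
        rintro rfl
        exact hy3 hp
      · rintro ⟨⟨hy1, hy2⟩, hy3⟩
        exact ⟨⟨le_of_lt hy1, hy2⟩, hy3⟩
    have heven : Even (((Finset.Ioo p q).filter (fun v => ¬ Conn a b i v)).card) :=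
      c.even_filter_Ioo hpq (fun v => ¬ Conn a b i v)
        (fun r hr => not_congr ⟨fun h' => Relation.ReflTransGen.tail h' (hc r hr),
          fun h' => Relation.ReflTransGen.tail h' (glueRel_symm (hc r hr))⟩)
    obtain ⟨t, ht⟩ := heven
    rw [hIco] at hsplit
    omega
  -- invariance of the parity count along the component of `i`
  have main : ∀ y, Conn a b i y →
      ((Finset.range y).filter (fun v => ¬ Conn a b i v)).card % 2
        = ((Finset.range i).filter (fun v => ¬ Conn a b i v)).card % 2 := by
    intro y hy
    induction hy with
    | refl => rfl
    | @tail u w h1 h2 ih =>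
      have hw : Conn a b i w := Relation.ReflTransGen.tail h1 h2
      rcases h2 with h | h | h | h
      · exact (key a (fun r hr => Or.inl (by simpa using hr)) u w h h1).trans ih
      · exact ((key a (fun r hr => Or.inl (by simpa using hr)) w u h hw).symm).trans ih
      · exact (key b (fun r hr => Or.inr (Or.inr (Or.inl (by simpa using hr)))) u w h h1).trans ih
      · exact ((key b (fun r hr => Or.inr (Or.inr (Or.inl (by simpa using hr)))) w u h hw).symm).trans ih
  -- vertices in `(i,j)` off the component of `i` : even count
  have hNj := main j hsame
  have hsplit := range_filter_split (fun v => ¬ Conn a b i v) (le_of_lt hij)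
  have hIco : (Finset.Ico i j).filter (fun v => ¬ Conn a b i v)
      = (Finset.Ioo i j).filter (fun v => ¬ Conn a b i v) := by
    ext y
    simp only [Finset.mem_filter, Finset.mem_Ico, Finset.mem_Ioo]
    constructor
    · rintro ⟨⟨hy1, hy2⟩, hy3⟩
      refine ⟨⟨lt_of_le_of_ne hy1 ?_, hy2⟩, hy3⟩
      rintro rfl
      exact hy3 hconn_i
    · rintro ⟨⟨hy1, hy2⟩, hy3⟩
      exact ⟨⟨le_of_lt hy1, hy2⟩, hy3⟩
  rw [hIco] at hsplit
  have hU1 : ((Finset.Ioo i j).filter (fun v => ¬ Conn a b i v)).card % 2 = 0 := by omega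
  -- vertices in `(i,j)` on the component of `i` : even count
  have hU0 : Even (((Finset.Ioo i j).filter (fun v => Conn a b i v)).card) := by
    apply even_card_of_involution a.partner
    intro v hv
    rw [Finset.mem_filter, Finset.mem_Ioo] at hv
    obtain ⟨⟨h1, h2⟩, hCv⟩ := hv
    have h2l : v < l := by omega
    obtain ⟨r, hra, hvr, hl1, hl2⟩ := a.cover_s15 houter h1 h2l
    have hr12 : r.1 < r.2 := (a.mem_range r hra).2.1
    rcases hvr with rfl | rfl
    · rcases hclass r hra hl1 h2 hl2 with ⟨hh1, hh2⟩ | ⟨hh1, hh2⟩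
      · rw [a.partner_fst hra]
        refine ⟨Finset.mem_filter.mpr ⟨Finset.mem_Ioo.mpr ⟨hh1, hh2⟩, ?_⟩,
          by omega, a.partner_snd hra⟩
        exact Relation.ReflTransGen.tail hCv (Or.inl (by simpa using hra))
      · exact absurd hCv (hnone r hra hl1 h2 hh1 hh2)
    · rw [a.partner_snd hra]
      refine ⟨Finset.mem_filter.mpr ⟨Finset.mem_Ioo.mpr ⟨hl1, by omega⟩, ?_⟩,
        by omega, a.partner_fst hra⟩
      exact Relation.ReflTransGen.tail hCv (Or.inr (Or.inl (by simpa using hra)))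
  -- hence the whole interval `(i,j)` has even cardinality
  have hUsum : ((Finset.Ioo i j).filter (fun v => Conn a b i v)).card
      + ((Finset.Ioo i j).filter (fun v => ¬ Conn a b i v)).card
      = (Finset.Ioo i j).card := by
    exact Finset.card_filter_add_card_filter_not (p := fun v => Conn a b i v)
  -- vertices of `(i,j)` that are not left endpoints of "between" arcs : even count
  have hRest : Even (((Finset.Ioo i j).filter (fun v =>
      ¬ ∃ r, r ∈ a.arcs ∧ (i < r.1 ∧ r.1 < j ∧ k < r.2 ∧ r.2 < l) ∧ r.1 = v)).card) := by
    apply even_card_of_involution a.partner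
    intro v hv
    rw [Finset.mem_filter, Finset.mem_Ioo] at hv
    obtain ⟨⟨h1, h2⟩, hNv⟩ := hv
    have h2l : v < l := by omega
    obtain ⟨r, hra, hvr, hl1, hl2⟩ := a.cover_s15 houter h1 h2l
    have hr12 : r.1 < r.2 := (a.mem_range r hra).2.1
    rcases hvr with rfl | rfl
    · rcases hclass r hra hl1 h2 hl2 with ⟨hh1, hh2⟩ | ⟨hh1, hh2⟩
      · rw [a.partner_fst hra]
        refine ⟨Finset.mem_filter.mpr ⟨Finset.mem_Ioo.mpr ⟨hh1, hh2⟩, ?_⟩,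
          by omega, a.partner_snd hra⟩
        rintro ⟨r', hr', hb', he'⟩
        have : r' = r := a.eq_of_shared hr' hra (Or.inl he'.symm) (Or.inr rfl)
        rw [this] at he'
        omega
      · exact absurd ⟨r, hra, ⟨hl1, h2, hh1, hh2⟩, rfl⟩ hNv
    · rw [a.partner_snd hra]
      refine ⟨Finset.mem_filter.mpr ⟨Finset.mem_Ioo.mpr ⟨hl1, by omega⟩, ?_⟩,
        by omega, a.partner_fst hra⟩
      rintro ⟨r', hr', hb', he'⟩
      have : r' = r := a.eq_of_shared hr' hra (Or.inl he'.symm) (Or.inl rfl)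
      rw [this] at hb'
      omega
  have hsum2 : ((Finset.Ioo i j).filter (fun v =>
        ∃ r, r ∈ a.arcs ∧ (i < r.1 ∧ r.1 < j ∧ k < r.2 ∧ r.2 < l) ∧ r.1 = v)).card
      + ((Finset.Ioo i j).filter (fun v =>
        ¬ ∃ r, r ∈ a.arcs ∧ (i < r.1 ∧ r.1 < j ∧ k < r.2 ∧ r.2 < l) ∧ r.1 = v)).card
      = (Finset.Ioo i j).card := by
    exact Finset.card_filter_add_card_filter_not
      (p := fun v => ∃ r, r ∈ a.arcs ∧ (i < r.1 ∧ r.1 < j ∧ k < r.2 ∧ r.2 < l) ∧ r.1 = v)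
  -- so the set of left endpoints of "between" arcs has even cardinality
  have hB : Even (((Finset.Ioo i j).filter (fun v =>
      ∃ r, r ∈ a.arcs ∧ (i < r.1 ∧ r.1 < j ∧ k < r.2 ∧ r.2 < l) ∧ r.1 = v)).card) := by
    rw [Nat.even_iff] at hU0 hRest ⊢
    omega
  -- identify the "between" arcs with their left endpoints
  have himg : (a.arcs.filter (fun q => i < q.1 ∧ q.1 < j ∧ k < q.2 ∧ q.2 < l)).image Prod.fst
      = (Finset.Ioo i j).filter (fun v =>
        ∃ r, r ∈ a.arcs ∧ (i < r.1 ∧ r.1 < j ∧ k < r.2 ∧ r.2 < l) ∧ r.1 = v) := by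
    ext v
    simp only [Finset.mem_image, Finset.mem_filter, Finset.mem_Ioo]
    constructor
    · rintro ⟨q, ⟨hqa, hq1, hq2, hq3, hq4⟩, rfl⟩
      exact ⟨⟨hq1, hq2⟩, q, hqa, ⟨hq1, hq2, hq3, hq4⟩, rfl⟩
    · rintro ⟨⟨h1, h2⟩, r, hra, hb, rfl⟩
      exact ⟨r, ⟨hra, hb.1, hb.2.1, hb.2.2.1, hb.2.2.2⟩, rfl⟩
  have hinj : Set.InjOn Prod.fst
      ((a.arcs.filter (fun q => i < q.1 ∧ q.1 < j ∧ k < q.2 ∧ q.2 < l)) : Set (ℕ × ℕ)) := by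
    intro x hx y hy hxy
    rw [Finset.mem_coe, Finset.mem_filter] at hx hy
    exact a.eq_of_shared hx.1 hy.1 (Or.inl rfl) (Or.inl hxy)
  have hfin := Finset.card_image_of_injOn hinj
  rw [himg] at hfin
  rw [hfin] at hB
  exact hB
end
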